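/- arXiv:2110.09340 — 9 statements merged into one kernel-verified Lean document; each statement's English description precedes it below -/
import Mathlib

section
/- For every (k,m) ∈ ℕ × ℕ*: (i) F_{k,m}(ℳ_{k,m}) = ℳ_{k,m}; (ii) F_{k,m} is homogeneous of degree d on ℳ_{k,m}, i.e. F_{k,m}(t·x) = t^d·F_{k,m}(x) for all t ∈ ℂ and x ∈ ℳ_{k,m}; (iii) F_{k,m} is nondegenerate on ℳ_{k,m}, i.e. the only x ∈ ℳ_{k,m} with F_{k,m}(x) = 0 is x = 0. -/
noncomputable section

/-- Model of the space `𝓔 = ℂ^{ℕ*}` of complex sequences `(x_i)_{i ≥ 1}`: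
functions `ℕ → ℂ` with a dummy coordinate `x 0` which encodes the convention `x₀ := 0`. -/
abbrev Eseq : Type := ℕ → ℂ

/-- The submodule of `ℕ → ℂ` corresponding to `𝓔` (dummy coordinate `0` vanishes). -/
def E0 : Submodule ℂ Eseq where
  carrier := {x | x 0 = 0}
  add_mem' := by
    rintro a b ha hb
    simp only [Set.mem_setOf_eq, Pi.add_apply] at *
    rw [ha, hb]; ring
  zero_mem' := rfl
  smul_mem' := by
    rintro c a ha
    simp only [Set.mem_setOf_eq, Pi.smul_apply] at *
    rw [ha, smul_zero]

/-- `𝓛`: the subspace of constant sequences. -/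
def Lconst : Submodule ℂ Eseq where
  carrier := {x | x 0 = 0 ∧ ∀ i, 1 ≤ i → x i = x 1}
  add_mem' := by
    rintro a b ⟨ha0, ha⟩ ⟨hb0, hb⟩
    exact ⟨by simp [ha0, hb0], fun i hi => by simp only [Pi.add_apply, ha i hi, hb i hi]⟩
  zero_mem' := ⟨rfl, fun i _ => rfl⟩
  smul_mem' := by
    rintro c a ⟨ha0, ha⟩
    exact ⟨by simp [ha0], fun i hi => by simp only [Pi.smul_apply, ha i hi]⟩

/-- `ℋ_{k,m} = {x ∈ 𝓔 : β x_{k+m} − x_k = 0}` (convention `x₀ := 0`). -/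
def Hspace (β : ℂ) (k m : ℕ) : Submodule ℂ Eseq where
  carrier := {x | x 0 = 0 ∧ β * x (k + m) - x k = 0}
  add_mem' := by
    rintro a b ⟨ha0, ha⟩ ⟨hb0, hb⟩
    refine ⟨by simp [ha0, hb0], ?_⟩
    simp only [Pi.add_apply]
    linear_combination ha + hb
  zero_mem' := ⟨rfl, by simp⟩
  smul_mem' := by
    rintro c a ⟨ha0, ha⟩
    refine ⟨by simp [ha0], ?_⟩
    simp only [Pi.smul_apply, smul_eq_mul]
    linear_combination c * ha

/-- `𝓟_{k,m} = {x ∈ 𝓔 : x_{i+m} = x_i for all i ≥ k+1}`. -/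
def Pspace (k m : ℕ) : Submodule ℂ Eseq where
  carrier := {x | x 0 = 0 ∧ ∀ i, k + 1 ≤ i → x (i + m) = x i}
  add_mem' := by
    rintro a b ⟨ha0, ha⟩ ⟨hb0, hb⟩
    exact ⟨by simp [ha0, hb0], fun i hi => by simp only [Pi.add_apply, ha i hi, hb i hi]⟩
  zero_mem' := ⟨rfl, fun i _ => rfl⟩
  smul_mem' := by
    rintro c a ⟨ha0, ha⟩
    exact ⟨by simp [ha0], fun i hi => by simp only [Pi.smul_apply, ha i hi]⟩

/-- `ℳ_{k,m} = 𝓟_{k,m} ∩ ℋ_{k,m}`. -/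
def Mspace (β : ℂ) (k m : ℕ) : Submodule ℂ Eseq := Pspace k m ⊓ Hspace β k m

/-- `Q : 𝓔 → 𝓔`, `Q(x)_1 = 0`, `Q(x)_i = x_{i-1}^d` for `i ≥ 2`. -/
def Qmap (d : ℕ) (x : Eseq) : Eseq := fun i => if 2 ≤ i then (x (i - 1)) ^ d else 0

/-- The constant subtracted by the projection `π_{k,m}` onto `ℋ_{k,m}` parallel to `𝓛`. -/
def kappa (β : ℂ) (k m : ℕ) (x : Eseq) : ℂ :=
  if k = 0 then x m else (β * x (k + m) - x k) / (β - 1)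

/-- `π_{k,m} : 𝓔 → 𝓔`, the projection onto `ℋ_{k,m}` parallel to `𝓛`. -/
def projH (β : ℂ) (k m : ℕ) (x : Eseq) : Eseq :=
  fun i => if i = 0 then 0 else x i - kappa β k m x

/-- `F_{k,m} = π_{k,m} ∘ Q`. -/
def Fmap (β : ℂ) (d k m : ℕ) (x : Eseq) : Eseq := projH β k m (Qmap d x)

/-- The coordinate linear form `ω_i` on `ℳ_{k,m}`. -/
def omegaForm (β : ℂ) (k m : ℕ) (i : ℕ) : Module.Dual ℂ (Mspace β k m) where
  toFun v := (v : Eseq) i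
  map_add' a b := rfl
  map_smul' c a := rfl

/-- `L` is the derivative `D_x F_{k,m} : ℳ_{k,m} → ℳ_{k,m}` of `F_{k,m}` at `x`:
in every direction `v ∈ ℳ_{k,m}` and coordinate `i`, `L v` is the derivative at `t = 0`
of `t ↦ F_{k,m}(x + t v)_i`. -/
def IsDerivAt (β : ℂ) (d k m : ℕ) (x : Eseq)
    (L : Mspace β k m →ₗ[ℂ] Mspace β k m) : Prop :=
  ∀ v : Mspace β k m, ∀ i : ℕ,
    ((L v : Eseq) i) = deriv (fun t : ℂ => Fmap β d k m (x + t • (v : Eseq)) i) 0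

/-- The critical set `C(F_{k,m})`: points of `ℳ_{k,m}` where the derivative is not invertible. -/
def CsetD (β : ℂ) (d k m : ℕ) : Set Eseq :=
  {x | x ∈ Mspace β k m ∧
    ∀ L : Mspace β k m →ₗ[ℂ] Mspace β k m, IsDerivAt β d k m x L → ¬ Function.Bijective L}

/-- The post-critical set `PC(F_{k,m}) = ⋃_{j ≥ 1} F_{k,m}^{∘j}(C(F_{k,m}))`. -/
def PCsetD (β : ℂ) (d k m : ℕ) : Set Eseq :=
  ⋃ j : ℕ, ⋃ _ : 1 ≤ j, (Fmap β d k m)^[j] '' CsetD β d k m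

/-- `Δ_{k,m} = {x ∈ ℳ_{k,m} : x_i = x_j for some 1 ≤ i < j ≤ k+m}`. -/
def Delta (β : ℂ) (k m : ℕ) : Set Eseq :=
  {x | x ∈ Mspace β k m ∧ ∃ i j : ℕ, 1 ≤ i ∧ i < j ∧ j ≤ k + m ∧ x i = x j}

/-- Coordinates of a point of `ℂ^n`, indexed from `1` to `n`, with the convention `x₀ := 0`
(and value `0` out of range). -/
def coordFin {n : ℕ} (x : Fin n → ℂ) (i : ℕ) : ℂ :=
  if h : 1 ≤ i ∧ i ≤ n then x ⟨i - 1, by omega⟩ else 0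

/-- The Koch map `G_{k,m} : ℂ^{k+m-1} → ℂ^{k+m-1}`. -/
def Gmap (β : ℂ) (d k m : ℕ) (x : Fin (k + m - 1) → ℂ) : Fin (k + m - 1) → ℂ :=
  if k = 0 then
    fun j => (coordFin x j.1) ^ d - (coordFin x (m - 1)) ^ d
  else
    fun j =>
      (coordFin x j.1 - (β * coordFin x (k + m - 1) - coordFin x (k - 1)) / (β - 1)) ^ d

/-- The critical set `C(G_{k,m})`: points where the derivative is not invertible. -/
def Gcrit (β : ℂ) (d k m : ℕ) : Set (Fin (k + m - 1) → ℂ) :=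
  {z | ¬ Function.Bijective (fderiv ℂ (Gmap β d k m) z)}

/-- The post-critical set `PC(G_{k,m}) = ⋃_{j ≥ 1} G_{k,m}^{∘j}(C(G_{k,m}))`. -/
def GPC (β : ℂ) (d k m : ℕ) : Set (Fin (k + m - 1) → ℂ) :=
  ⋃ j : ℕ, ⋃ _ : 1 ≤ j, (Gmap β d k m)^[j] '' Gcrit β d k m

/-- The polynomial `P_z` associated to a point `z ∈ ℂ^{k+m-1}`. -/
def Ppoly (β : ℂ) (d k m : ℕ) (z : Fin (k + m - 1) → ℂ) : ℂ → ℂ :=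
  if k = 0 then fun t => t ^ d - (coordFin z (m - 1)) ^ d
  else fun t => (t - (β * coordFin z (k + m - 1) - coordFin z (k - 1)) / (β - 1)) ^ d


lemma mem_Pspace {k m : ℕ} {x : Eseq} :
    x ∈ Pspace k m ↔ x 0 = 0 ∧ ∀ i, k + 1 ≤ i → x (i + m) = x i := Iff.rfl

lemma mem_Hspace {β : ℂ} {k m : ℕ} {x : Eseq} :
    x ∈ Hspace β k m ↔ x 0 = 0 ∧ β * x (k + m) - x k = 0 := Iff.rfl

lemma mem_Mspace {β : ℂ} {k m : ℕ} {x : Eseq} :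
    x ∈ Mspace β k m ↔ x ∈ Pspace k m ∧ x ∈ Hspace β k m := Submodule.mem_inf

/-- A choice of `d`-th root on `ℂ`. -/
def droot (d : ℕ) (w : ℂ) : ℂ := if w = 0 then 0 else Complex.exp (Complex.log w / d)

lemma droot_pow {d : ℕ} (hd : d ≠ 0) (w : ℂ) : droot d w ^ d = w := by
  unfold droot
  split_ifs with h
  · simp [h, zero_pow hd]
  · rw [← Complex.exp_nat_mul]
    have hdc : (d : ℂ) ≠ 0 := Nat.cast_ne_zero.mpr hd
    rw [mul_div_cancel₀ _ hdc, Complex.exp_log h]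

lemma Fmap_apply (β : ℂ) (d k m : ℕ) (x : Eseq) (i : ℕ) :
    Fmap β d k m x i =
      if i = 0 then 0 else Qmap d x i - kappa β k m (Qmap d x) := rfl

lemma Qmap_smul (d : ℕ) (t : ℂ) (x : Eseq) : Qmap d (t • x) = t ^ d • Qmap d x := by
  funext i
  simp only [Qmap, Pi.smul_apply, smul_eq_mul]
  split_ifs with h
  · ring
  · ring

lemma kappa_smul (β : ℂ) (k m : ℕ) (c : ℂ) (y : Eseq) :
    kappa β k m (c • y) = c * kappa β k m y := by
  unfold kappa
  split_ifs with h
  · simp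
  · simp only [Pi.smul_apply, smul_eq_mul]
    have : β * (c * y (k + m)) - c * y k = c * (β * y (k + m) - y k) := by ring
    rw [this, mul_div_assoc]


/-- A lift of `y` under `F`. -/
def xlift (β : ℂ) (d k m : ℕ) (y : Eseq) : Eseq := fun j =>
  if j = 0 then 0
  else if j = k then β * droot d (y (k + m + 1) - y 1)
  else droot d (y (j + 1) - y 1)

/-- `F_{k,m}(ℳ_{k,m}) = ℳ_{k,m}`; `F_{k,m}` is homogeneous of degree `d`
and nondegenerate on `ℳ_{k,m}`. -/
theorem stmt4 (d : ℕ) (hd : 2 ≤ d) (β : ℂ) (hβd : β ^ d = 1) (hβ1 : β ≠ 1)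
    (k m : ℕ) (hm : 1 ≤ m) :
    Fmap β d k m '' (Mspace β k m : Set Eseq) = (Mspace β k m : Set Eseq) ∧
    (∀ (t : ℂ) (x : Eseq), x ∈ Mspace β k m →
      Fmap β d k m (t • x) = t ^ d • Fmap β d k m x) ∧
    (∀ x ∈ Mspace β k m, Fmap β d k m x = 0 → x = 0) := by
  have hd0 : d ≠ 0 := by omega
  have hβ0 : β ≠ 0 := fun h => by simp [h, zero_pow hd0] at hβd
  have hβ1' : β - 1 ≠ 0 := sub_ne_zero.mpr hβ1
  have hom : ∀ (t : ℂ) (x : Eseq), Fmap β d k m (t • x) = t ^ d • Fmap β d k m x := by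
    intro t x
    funext i
    simp only [Fmap_apply, Pi.smul_apply, smul_eq_mul, Qmap_smul, kappa_smul]
    split_ifs with h
    · ring
    · ring
  refine ⟨?_, fun t x _ => hom t x, ?_⟩
  · apply Set.Subset.antisymm
    · rintro _ ⟨x, hx, rfl⟩
      obtain ⟨hP, hH⟩ := mem_Mspace.mp hx
      obtain ⟨hx0, hxP⟩ := mem_Pspace.mp hP
      obtain ⟨-, hxH⟩ := mem_Hspace.mp hH
      have yper : ∀ i, k + 1 ≤ i → Qmap d x (i + m) = Qmap d x i := by
        intro i hi
        have h2 : 2 ≤ i + m := by omega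
        rcases Nat.lt_or_ge i (k + 2) with hik | hik
        · have hik1 : i = k + 1 := by omega
          subst hik1
          rcases Nat.eq_zero_or_pos k with hk | hk
          · subst hk
            have hxm : x m = 0 := by
              have h := hxH
              rw [Nat.zero_add, hx0, sub_zero] at h
              exact (mul_eq_zero.mp h).resolve_left hβ0
            have e : 0 + 1 + m - 1 = m := by omega
            simp only [Qmap, if_pos h2, e, hxm, zero_pow hd0]
            rw [if_neg (by omega : ¬ 2 ≤ 0 + 1)]
          · have e1 : k + 1 + m - 1 = k + m := by omega
            have e2 : k + 1 - 1 = k := by omega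
            simp only [Qmap, if_pos h2, if_pos (show 2 ≤ k + 1 by omega), e1, e2]
            have hx' : x k = β * x (k + m) := by linear_combination -hxH
            rw [hx', mul_pow, hβd, one_mul]
        · have e1 : i + m - 1 = (i - 1) + m := by omega
          simp only [Qmap, if_pos h2, if_pos (show 2 ≤ i by omega), e1]
          rw [hxP (i - 1) (by omega)]
      rw [SetLike.mem_coe, mem_Mspace]
      constructor
      · rw [mem_Pspace]
        refine ⟨rfl, fun i hi => ?_⟩
        simp only [Fmap_apply, if_neg (show ¬ i + m = 0 by omega),
          if_neg (show ¬ i = 0 by omega), yper i hi]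
      · rw [mem_Hspace]
        refine ⟨rfl, ?_⟩
        rcases Nat.eq_zero_or_pos k with hk | hk
        · subst hk
          simp only [Fmap_apply, if_pos rfl, Nat.zero_add,
            if_neg (show ¬ m = 0 by omega)]
          have hκ : kappa β 0 m (Qmap d x) = Qmap d x m := by
            unfold kappa; rw [if_pos rfl]
          rw [hκ]; simp
        · simp only [Fmap_apply, if_neg (show ¬ k + m = 0 by omega),
            if_neg (show ¬ k = 0 by omega)]
          have hκ : kappa β k m (Qmap d x)
              = (β * Qmap d x (k + m) - Qmap d x k) / (β - 1) := by
            unfold kappa; rw [if_neg (show ¬ k = 0 by omega)]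
          rw [hκ]
          field_simp
          ring
    · intro y hy
      obtain ⟨hP, hH⟩ := mem_Mspace.mp hy
      obtain ⟨hy0, hyP⟩ := mem_Pspace.mp hP
      obtain ⟨-, hyH⟩ := mem_Hspace.mp hH
      have hx0' : xlift β d k m y 0 = 0 := by simp [xlift]
      have hxj : ∀ j, j ≠ 0 → j ≠ k →
          xlift β d k m y j = droot d (y (j + 1) - y 1) := by
        intro j h1 h2; simp [xlift, h1, h2]
      have hxk : k ≠ 0 → xlift β d k m y k = β * droot d (y (k + m + 1) - y 1) := by
        intro hk0; simp [xlift, hk0]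
      have hpow : ∀ j, 1 ≤ j → xlift β d k m y j ^ d = y (j + 1) - y 1 := by
        intro j hj
        rcases eq_or_ne j k with rfl | hjk
        · rw [hxk (by omega), mul_pow, hβd, one_mul, droot_pow hd0]
          have e : j + m + 1 = j + 1 + m := by omega
          rw [e, hyP (j + 1) (by omega)]
        · rw [hxj j (by omega) hjk, droot_pow hd0]
      have hQx : ∀ i, 1 ≤ i → Qmap d (xlift β d k m y) i = y i - y 1 := by
        intro i hi
        rcases Nat.lt_or_ge i 2 with h2 | h2
        · have hi1 : i = 1 := by omega
          subst hi1
          simp [Qmap]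
        · rw [show Qmap d (xlift β d k m y) i = xlift β d k m y (i - 1) ^ d from by
            simp [Qmap, h2]]
          rw [hpow (i - 1) (by omega)]
          have e : i - 1 + 1 = i := by omega
          rw [e]
      have hκ : kappa β k m (Qmap d (xlift β d k m y)) = - y 1 := by
        rcases Nat.eq_zero_or_pos k with hk | hk
        · subst hk
          unfold kappa
          rw [if_pos rfl, hQx m hm]
          have hym : y m = 0 := by
            have h := hyH
            rw [Nat.zero_add, hy0, sub_zero] at h
            exact (mul_eq_zero.mp h).resolve_left hβ0
          rw [hym]; ring
        · unfold kappa
          rw [if_neg (show ¬ k = 0 by omega), hQx (k + m) (by omega),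
            hQx k (by omega), div_eq_iff hβ1']
          linear_combination hyH
      refine ⟨xlift β d k m y, ?_, ?_⟩
      · rw [SetLike.mem_coe, mem_Mspace]
        constructor
        · rw [mem_Pspace]
          refine ⟨hx0', fun i hi => ?_⟩
          rw [hxj (i + m) (by omega) (by omega), hxj i (by omega) (by omega)]
          have e : i + m + 1 = i + 1 + m := by omega
          rw [e, hyP (i + 1) (by omega)]
        · rw [mem_Hspace]
          refine ⟨hx0', ?_⟩
          rcases Nat.eq_zero_or_pos k with hk | hk
          · subst hk
            rw [Nat.zero_add, hx0', sub_zero, hxj m (by omega) (by omega)]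
            have e : m + 1 = 1 + m := by omega
            rw [e, hyP 1 (by omega), sub_self]
            simp [droot]
          · rw [hxj (k + m) (by omega) (by omega), hxk (by omega)]
            ring
      · funext i
        rcases Nat.eq_zero_or_pos i with hi | hi
        · subst hi
          rw [Fmap_apply, if_pos rfl, hy0]
        · rw [Fmap_apply, if_neg (show ¬ i = 0 by omega), hQx i hi, hκ]
          ring
  · intro x hx hF
    obtain ⟨hP, hH⟩ := mem_Mspace.mp hx
    obtain ⟨hx0, -⟩ := mem_Pspace.mp hP
    have hκ0 : kappa β k m (Qmap d x) = 0 := by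
      have h1 := congrFun hF 1
      rw [Fmap_apply, if_neg one_ne_zero] at h1
      have hq1 : Qmap d x 1 = 0 := by simp [Qmap]
      rw [hq1, zero_sub] at h1
      simpa using h1
    funext j
    rcases Nat.eq_zero_or_pos j with hj | hj
    · subst hj; simpa using hx0
    · have h := congrFun hF (j + 1)
      rw [Fmap_apply, if_neg (show ¬ j + 1 = 0 by omega), hκ0, sub_zero] at h
      have hq : Qmap d x (j + 1) = x j ^ d := by
        simp [Qmap, show 2 ≤ j + 1 by omega]
      rw [hq] at h
      simp only [Pi.zero_apply] at h ⊢
      exact pow_eq_zero_iff hd0 |>.mp h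
end
end

section
/- For every (k,m) ∈ ℕ × ℕ*, the intersection of the images of all iterates of F_{k,m} on 𝓔 equals ℳ_{k,m}: ⋂_{n≥1} F_{k,m}^{∘n}(𝓔) = ℳ_{k,m}. -/
noncomputable section

section Stmt5Aux

variable {β : ℂ} {d k m : ℕ}

lemma mem_Pspace_iff {x : Eseq} :
    x ∈ Pspace k m ↔ (x 0 = 0 ∧ ∀ i, k + 1 ≤ i → x (i + m) = x i) := Iff.rfl

lemma mem_Hspace_iff {x : Eseq} :
    x ∈ Hspace β k m ↔ (x 0 = 0 ∧ β * x (k + m) - x k = 0) := Iff.rfl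

lemma mem_E0_iff {x : Eseq} : x ∈ E0 ↔ x 0 = 0 := Iff.rfl

lemma Qmap_eq (hd : 1 ≤ d) {x : Eseq} (hx : x 0 = 0) {i : ℕ} (hi : 1 ≤ i) :
    Qmap d x i = x (i - 1) ^ d := by
  unfold Qmap
  rcases Nat.lt_or_ge i 2 with h | h
  · interval_cases i
    rw [if_neg (by omega)]
    simp only [Nat.sub_self, hx]
    exact (zero_pow (by omega)).symm
  · rw [if_pos h]

lemma Fmap_zero_coord (x : Eseq) : Fmap β d k m x 0 = 0 := by
  simp [Fmap, projH]

lemma Fmap_eq (hd : 1 ≤ d) {x : Eseq} (hx : x 0 = 0) {i : ℕ} (hi : 1 ≤ i) :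
    Fmap β d k m x i = x (i - 1) ^ d - kappa β k m (Qmap d x) := by
  show projH β k m (Qmap d x) i = _
  unfold projH
  rw [if_neg (by omega), Qmap_eq hd hx hi]

lemma Fmap_H (hβ1 : β ≠ 1) (hm : 1 ≤ m) (x : Eseq) :
    β * Fmap β d k m x (k + m) - Fmap β d k m x k = 0 := by
  show β * projH β k m (Qmap d x) (k + m) - projH β k m (Qmap d x) k = 0
  unfold projH kappa
  rcases Nat.eq_zero_or_pos k with rfl | hk
  · rw [if_pos rfl, if_pos rfl, if_neg (by omega : ¬ 0 + m = 0)]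
    simp only [Nat.zero_add]
    ring
  · rw [if_neg (by omega : ¬ k + m = 0), if_neg (by omega : ¬ k = 0),
      if_neg (by omega : ¬ k = 0)]
    have h1 : β - 1 ≠ 0 := sub_ne_zero.mpr hβ1
    field_simp
    ring

lemma iter_props (hβd : β ^ d = 1) (hβ1 : β ≠ 1) (hd : 1 ≤ d) (hm : 1 ≤ m)
    {x : Eseq} (hx : x 0 = 0) :
    ∀ n, 1 ≤ n →
      ((Fmap β d k m)^[n] x 0 = 0 ∧
       β * (Fmap β d k m)^[n] x (k + m) - (Fmap β d k m)^[n] x k = 0 ∧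
       ∀ i, k + 1 ≤ i → i + 1 ≤ k + n →
         (Fmap β d k m)^[n] x (i + m) = (Fmap β d k m)^[n] x i) := by
  intro n
  induction n with
  | zero => intro h; omega
  | succ n ih =>
    intro _
    rcases Nat.eq_zero_or_pos n with rfl | hn
    · simp only [Nat.zero_add, Function.iterate_one]
      exact ⟨Fmap_zero_coord x, Fmap_H hβ1 hm x, fun i h1 h2 => by omega⟩
    · obtain ⟨hz0, hzH, hzP⟩ := ih hn
      set z := (Fmap β d k m)^[n] x with hzdef
      have hit : (Fmap β d k m)^[n + 1] x = Fmap β d k m z :=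
        Function.iterate_succ_apply' _ _ _
      rw [hit]
      refine ⟨Fmap_zero_coord z, Fmap_H hβ1 hm z, ?_⟩
      intro i hi1 hi2
      obtain ⟨j, rfl⟩ : ∃ j, i = j + 1 := ⟨i - 1, by omega⟩
      rw [Fmap_eq hd hz0 (by omega : 1 ≤ j + 1 + m),
        Fmap_eq hd hz0 (by omega : 1 ≤ j + 1)]
      have hidx : j + 1 + m - 1 = j + m := by omega
      have hidx2 : j + 1 - 1 = j := by omega
      rw [hidx, hidx2]
      congr 1
      rcases Nat.lt_or_ge j (k + 1) with hj | hj
      · have hjk : j = k := by omega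
        subst hjk
        have h1 : z j = β * z (j + m) := by linear_combination -hzH
        rw [h1, mul_pow, hβd, one_mul]
      · rw [hzP j hj (by omega)]

/-- Index-reduction map for the periodic extension. -/
def jstar (k m j : ℕ) : ℕ := if j ≤ k then j else k + 1 + ((j - k - 1) % m)

/-- Candidate preimage of `y` under `F_{k,m}` built from a `d`-th root function. -/
def xpre (β : ℂ) (k m : ℕ) (root : ℂ → ℂ) (y : Eseq) : Eseq :=
  fun j => if j = 0 then 0
    else if jstar k m j = k + m then β⁻¹ * root (y (k + 1) - y 1)
    else root (y (jstar k m j + 1) - y 1)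

lemma jstar_add_m (hm : 1 ≤ m) {j : ℕ} (hj : k + 1 ≤ j) :
    jstar k m (j + m) = jstar k m j := by
  unfold jstar
  rw [if_neg (by omega), if_neg (by omega)]
  have : j + m - k - 1 = (j - k - 1) + m := by omega
  rw [this, Nat.add_mod_right]

lemma jstar_self : jstar k m (k + m) = k + m := by
  unfold jstar
  rcases Nat.eq_zero_or_pos m with rfl | hm
  · simp
  · rw [if_neg (by omega)]
    have : k + m - k - 1 = m - 1 := by omega
    rw [this, Nat.mod_eq_of_lt (by omega)]
    omega

lemma exists_preimage (hd : 2 ≤ d) (hβd : β ^ d = 1) (hβ1 : β ≠ 1) (hm : 1 ≤ m)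
    (y : Eseq) (hy : y ∈ Mspace β k m) :
    ∃ x, x ∈ Mspace β k m ∧ Fmap β d k m x = y := by
  have hβ0 : β ≠ 0 := by
    intro h
    rw [h, zero_pow (by omega)] at hβd
    exact zero_ne_one hβd
  obtain ⟨hPm, hHm⟩ := Submodule.mem_inf.mp hy
  obtain ⟨hy0, hyP⟩ := mem_Pspace_iff.mp hPm
  obtain ⟨-, hyH⟩ := mem_Hspace_iff.mp hHm
  have hex : ∀ w : ℂ, ∃ z : ℂ, z ^ d = w := fun w =>
    IsAlgClosed.exists_pow_nat_eq w (by omega : 0 < d)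
  choose root hrootd using hex
  have root0 : root 0 = 0 := pow_eq_zero_iff (by omega : d ≠ 0) |>.mp (hrootd 0)
  set x : Eseq := xpre β k m root y with hxdef
  have hx0 : x 0 = 0 := by simp [hxdef, xpre]
  -- extended periodicity of y
  have yext : ∀ t i, k + 1 ≤ i → y (i + t * m) = y i := by
    intro t
    induction t with
    | zero => simp
    | succ t ih =>
      intro i hi
      have h1 : i + (t + 1) * m = (i + t * m) + m := by ring
      rw [h1, hyP _ (by omega), ih i hi]
  have hyj : ∀ j, 1 ≤ j → y (jstar k m j + 1) = y (j + 1) := by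
    intro j hj
    by_cases h : j ≤ k
    · rw [jstar, if_pos h]
    · have hj2 : k + 1 ≤ j := by omega
      have hdm := Nat.div_add_mod (j - k - 1) m
      set r := (j - k - 1) % m with hr
      set q := (j - k - 1) / m with hq
      have hjs : jstar k m j = k + 1 + r := by rw [jstar, if_neg h]
      have hEq : j + 1 = (k + 2 + r) + q * m := by
        have : q * m = m * q := Nat.mul_comm q m
        omega
      rw [hjs, hEq, yext q (k + 2 + r) (by omega)]
      congr 1
      omega
  have hxd : ∀ j, 1 ≤ j → x j ^ d = y (j + 1) - y 1 := by
    intro j hj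
    rw [hxdef]
    unfold xpre
    rw [if_neg (by omega)]
    by_cases h : jstar k m j = k + m
    · rw [if_pos h, mul_pow, inv_pow, hβd, inv_one, one_mul, hrootd]
      have hjk : ¬ j ≤ k := by
        intro hc
        rw [jstar, if_pos hc] at h
        omega
      have h1 : y (j + 1) = y (k + 1) := by
        rw [← hyj j hj, h]
        have : k + m + 1 = (k + 1) + m := by omega
        rw [this, hyP (k + 1) le_rfl]
      rw [h1]
    · rw [if_neg h, hrootd, hyj j hj]
  have hxP : ∀ i, k + 1 ≤ i → x (i + m) = x i := by
    intro i hi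
    rw [hxdef]
    unfold xpre
    rw [jstar_add_m hm hi, if_neg (show ¬ i + m = 0 by omega),
      if_neg (show ¬ i = 0 by omega)]
  have hxkm : x (k + m) = β⁻¹ * root (y (k + 1) - y 1) := by
    rw [hxdef]
    unfold xpre
    rw [if_neg (by omega), if_pos jstar_self]
  have hxH : β * x (k + m) - x k = 0 := by
    rw [hxkm]
    rcases Nat.eq_zero_or_pos k with rfl | hk
    · have hy1 : y (0 + 1) - y 1 = 0 := by norm_num
      rw [hx0, hy1, root0]
      ring
    · have hjk : jstar k m k = k := by rw [jstar, if_pos le_rfl]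
      have hxk : x k = root (y (k + 1) - y 1) := by
        rw [hxdef]
        unfold xpre
        rw [if_neg (by omega), if_neg (by omega)]
        rw [hjk]
      rw [hxk]
      field_simp
      ring
  have hxM : x ∈ Mspace β k m :=
    Submodule.mem_inf.mpr ⟨mem_Pspace_iff.mpr ⟨hx0, hxP⟩, mem_Hspace_iff.mpr ⟨hx0, hxH⟩⟩
  refine ⟨x, hxM, ?_⟩
  -- compute Qmap values
  have hQ : ∀ i, 1 ≤ i → Qmap d x i = y i - y 1 := by
    intro i hi
    rw [Qmap_eq (by omega) hx0 hi]
    rcases Nat.lt_or_ge i 2 with h | h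
    · interval_cases i
      simp [hx0, zero_pow (by omega : d ≠ 0)]
    · have h1 := hxd (i - 1) (by omega)
      have h2 : i - 1 + 1 = i := by omega
      rw [h1, h2]
  have hym0 : k = 0 → y m = 0 := by
    intro hk
    subst hk
    rw [Nat.zero_add, hy0, mul_comm] at hyH
    have := sub_eq_zero.mp hyH
    -- this : y m * β = 0
    rcases mul_eq_zero.mp (by linear_combination hyH : β * y m = 0) with h | h
    · exact absurd h hβ0
    · exact h
  have hκ : kappa β k m (Qmap d x) = - y 1 := by
    unfold kappa
    rcases Nat.eq_zero_or_pos k with rfl | hk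
    · rw [if_pos rfl, hQ m hm, hym0 rfl]
      ring
    · rw [if_neg (by omega), hQ (k + m) (by omega), hQ k (by omega),
        div_eq_iff (sub_ne_zero.mpr hβ1)]
      linear_combination hyH
  funext i
  rcases Nat.eq_zero_or_pos i with rfl | hi
  · rw [Fmap_zero_coord, hy0]
  · rw [Fmap_eq (by omega) hx0 hi, hκ]
    have hxi : x (i - 1) ^ d = y i - y 1 := by
      rcases Nat.lt_or_ge i 2 with h | h
      · interval_cases i
        simp [hx0, zero_pow (by omega : d ≠ 0)]
      · have h1 := hxd (i - 1) (by omega)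
        have h2 : i - 1 + 1 = i := by omega
        rw [h1, h2]
    rw [hxi]
    ring

end Stmt5Aux

/-- `⋂_{n ≥ 1} F_{k,m}^{∘n}(𝓔) = ℳ_{k,m}`. -/
theorem stmt5 (d : ℕ) (hd : 2 ≤ d) (β : ℂ) (hβd : β ^ d = 1) (hβ1 : β ≠ 1)
    (k m : ℕ) (hm : 1 ≤ m) :
    (⋂ n : ℕ, ⋂ _ : 1 ≤ n, (Fmap β d k m)^[n] '' (E0 : Set Eseq)) =
      (Mspace β k m : Set Eseq) := by
  have hd1 : 1 ≤ d := by omega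
  ext z
  simp only [Set.mem_iInter, Set.mem_image, SetLike.mem_coe]
  constructor
  · intro hz
    obtain ⟨x1, hx1, hx1e⟩ := hz 1 le_rfl
    have hx10 : x1 0 = 0 := mem_E0_iff.mp hx1
    have h1 := iter_props (k := k) hβd hβ1 hd1 hm hx10 1 le_rfl
    rw [Function.iterate_one] at hx1e
    have hz0 : z 0 = 0 := by
      rw [← hx1e]
      exact (Function.iterate_one (Fmap β d k m) ▸ h1.1 : _)
    have hzH : β * z (k + m) - z k = 0 := by
      rw [← hx1e]
      exact (Function.iterate_one (Fmap β d k m) ▸ h1.2.1 : _)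
    have hzP : ∀ i, k + 1 ≤ i → z (i + m) = z i := by
      intro i hi
      obtain ⟨x', hx', he⟩ := hz (i + 1) (by omega)
      have hx'0 : x' 0 = 0 := mem_E0_iff.mp hx'
      have h2 := (iter_props (k := k) hβd hβ1 hd1 hm hx'0 (i + 1) (by omega)).2.2 i hi (by omega)
      rw [he] at h2
      exact h2
    exact Submodule.mem_inf.mpr
      ⟨mem_Pspace_iff.mpr ⟨hz0, hzP⟩, mem_Hspace_iff.mpr ⟨hz0, hzH⟩⟩
  · intro hz n _
    have key : ∀ n : ℕ, ∃ x, x ∈ Mspace β k m ∧ (Fmap β d k m)^[n] x = z := by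
      intro n
      induction n with
      | zero => exact ⟨z, hz, rfl⟩
      | succ n ih =>
        obtain ⟨x, hxM, hxe⟩ := ih
        obtain ⟨x', hx'M, hx'e⟩ := exists_preimage hd hβd hβ1 hm x hxM
        exact ⟨x', hx'M, by rw [Function.iterate_succ_apply, hx'e, hxe]⟩
    obtain ⟨x, hxM, hxe⟩ := key n
    have hx0 : x 0 = 0 := (mem_Pspace_iff.mp (Submodule.mem_inf.mp hxM).1).1
    exact ⟨x, mem_E0_iff.mpr hx0, hxe⟩
end
end

section
/- For every (k,m) ∈ ℕ × ℕ* with k+m−1 ≥ 2, the maps F_{k,m} : ℳ_{k,m} → ℳ_{k,m} and G_{k,m} : ℂ^{k+m−1} → ℂ^{k+m−1} are conjugate: there exists a linear isomorphism h : ℳ_{k,m} → ℂ^{k+m−1} such that h ∘ F_{k,m} = G_{k,m} ∘ h on ℳ_{k,m}. -/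
noncomputable section

/-! ### Auxiliary material for `stmt6` -/

/-- The conjugating linear map in coordinates: truncation for `k = 0`,
shifted-and-normalized truncation for `k ≥ 1`. -/
def phiFun (k m : ℕ) (x : Eseq) : Fin (k + m - 1) → ℂ :=
  fun j => if k = 0 then x (j.1 + 1) else x (j.1 + 2) - x 1

/-- Periodic extension of a window `w` defined on `0, …, k+m`. -/
def extSeq (k m : ℕ) (w : ℕ → ℂ) : Eseq :=
  fun i => if i ≤ k + m then w i else w (k + 1 + (i - (k + 1)) % m)

/-- The window of the inverse map. -/
def wSeq (β : ℂ) (k m : ℕ) (z : Fin (k + m - 1) → ℂ) : ℕ → ℂ :=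
  fun i =>
    if k = 0 then (if i ≤ k + m - 1 then coordFin z i else 0)
    else (if i = 0 then 0 else
      coordFin z (i - 1) + (coordFin z (k - 1) - β * coordFin z (k + m - 1)) / (β - 1))

/-- The inverse of the conjugating map. -/
def psiFun (β : ℂ) (k m : ℕ) (z : Fin (k + m - 1) → ℂ) : Eseq :=
  extSeq k m (wSeq β k m z)

lemma mem_Mspace_iff (β : ℂ) (k m : ℕ) (x : Eseq) :
    x ∈ Mspace β k m ↔
      (x 0 = 0 ∧ ∀ i, k + 1 ≤ i → x (i + m) = x i) ∧ β * x (k + m) - x k = 0 := by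
  rw [Mspace, Submodule.mem_inf]
  constructor
  · rintro ⟨⟨h0, hP⟩, ⟨h0', hH⟩⟩
    exact ⟨⟨h0, hP⟩, hH⟩
  · rintro ⟨⟨h0, hP⟩, hH⟩
    exact ⟨⟨h0, hP⟩, ⟨h0, hH⟩⟩

lemma Qmap_coord {d : ℕ} (hd : 1 ≤ d) {x : Eseq} (hx0 : x 0 = 0) {i : ℕ} (hi : 1 ≤ i) :
    Qmap d x i = x (i - 1) ^ d := by
  unfold Qmap
  by_cases h2 : 2 ≤ i
  · rw [if_pos h2]
  · have hi1 : i = 1 := by omega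
    subst hi1
    rw [if_neg h2]
    simp [hx0, zero_pow (by omega : d ≠ 0)]

lemma Fmap_zero (β : ℂ) (d k m : ℕ) (x : Eseq) : Fmap β d k m x 0 = 0 := by
  unfold Fmap projH
  simp

lemma Fmap_coord (β : ℂ) (d k m : ℕ) (x : Eseq) {i : ℕ} (hi : 1 ≤ i) :
    Fmap β d k m x i = Qmap d x i - kappa β k m (Qmap d x) := by
  unfold Fmap projH
  rw [if_neg (by omega : ¬ i = 0)]

lemma Gmap_apply0 (β : ℂ) (d m : ℕ) (z : Fin (0 + m - 1) → ℂ) (j : Fin (0 + m - 1)) :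
    Gmap β d 0 m z j = coordFin z j.1 ^ d - coordFin z (m - 1) ^ d := by
  unfold Gmap
  rw [if_pos rfl]

lemma Gmap_applyk (β : ℂ) (d k m : ℕ) (hk : ¬ k = 0) (z : Fin (k + m - 1) → ℂ)
    (j : Fin (k + m - 1)) :
    Gmap β d k m z j =
      (coordFin z j.1 - (β * coordFin z (k + m - 1) - coordFin z (k - 1)) / (β - 1)) ^ d := by
  unfold Gmap
  rw [if_neg hk]

lemma extSeq_agree (k m : ℕ) (w : ℕ → ℂ) {i : ℕ} (hi : i ≤ k + m) :
    extSeq k m w i = w i := by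
  simp [extSeq, hi]

lemma extSeq_periodic (k m : ℕ) (hm : 1 ≤ m) (w : ℕ → ℂ) :
    ∀ i, k + 1 ≤ i → extSeq k m w (i + m) = extSeq k m w i := by
  intro i hi
  unfold extSeq
  rw [if_neg (by omega : ¬ i + m ≤ k + m)]
  by_cases h2 : i ≤ k + m
  · rw [if_pos h2]
    have e1 : i + m - (k + 1) = (i - (k + 1)) + m := by omega
    rw [e1, Nat.add_mod_right, Nat.mod_eq_of_lt (by omega)]
    congr 1
    omega
  · rw [if_neg h2]
    have e1 : i + m - (k + 1) = (i - (k + 1)) + m := by omega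
    rw [e1, Nat.add_mod_right]

lemma periodic_ext_unique (k m : ℕ) (hm : 1 ≤ m) (x y : Eseq)
    (hx : ∀ i, k + 1 ≤ i → x (i + m) = x i)
    (hy : ∀ i, k + 1 ≤ i → y (i + m) = y i)
    (h : ∀ i, i ≤ k + m → x i = y i) : x = y := by
  funext i
  induction i using Nat.strong_induction_on with
  | _ i ih =>
    by_cases hle : i ≤ k + m
    · exact h i hle
    · have h1 : i = (i - m) + m := by omega
      have h2 : k + 1 ≤ i - m := by omega
      rw [h1, hx _ h2, hy _ h2]
      exact ih (i - m) (by omega)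

lemma coordFin_phi0 (m : ℕ) {x : Eseq} (hx0 : x 0 = 0) {r : ℕ} (hr : r ≤ 0 + m - 1) :
    coordFin (phiFun 0 m x) r = x r := by
  by_cases h1 : 1 ≤ r
  · unfold coordFin
    rw [dif_pos ⟨h1, hr⟩]
    show (if (0 : ℕ) = 0 then x (r - 1 + 1) else x (r - 1 + 2) - x 1) = x r
    rw [if_pos rfl]
    congr 1
    omega
  · have hr0 : r = 0 := by omega
    subst hr0
    unfold coordFin
    rw [dif_neg (by omega)]
    exact hx0.symm

lemma coordFin_phik {k m : ℕ} (hk : ¬ k = 0) (x : Eseq) {r : ℕ} (h1 : 1 ≤ r)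
    (hr : r ≤ k + m - 1) :
    coordFin (phiFun k m x) r = x (r + 1) - x 1 := by
  unfold coordFin
  rw [dif_pos ⟨h1, hr⟩]
  show (if k = 0 then x (r - 1 + 1) else x (r - 1 + 2) - x 1) = x (r + 1) - x 1
  rw [if_neg hk]
  have e : r - 1 + 2 = r + 1 := by omega
  rw [e]

lemma coordFin_phik_pred {k m : ℕ} (hk : ¬ k = 0) (x : Eseq) :
    coordFin (phiFun k m x) (k - 1) = x k - x 1 := by
  by_cases h2 : 2 ≤ k
  · rw [coordFin_phik hk x (by omega) (by omega)]
    have e : k - 1 + 1 = k := by omega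
    rw [e]
  · have hk1 : k = 1 := by omega
    subst hk1
    unfold coordFin
    rw [dif_neg (by omega)]
    ring

lemma coordFin_phik_top {k m : ℕ} (hk : ¬ k = 0) (hn : 2 ≤ k + m - 1) (x : Eseq) :
    coordFin (phiFun k m x) (k + m - 1) = x (k + m) - x 1 := by
  rw [coordFin_phik hk x (by omega) le_rfl]
  have e : k + m - 1 + 1 = k + m := by omega
  rw [e]

lemma phiFun_add (k m : ℕ) (x y : Eseq) :
    phiFun k m (x + y) = phiFun k m x + phiFun k m y := by
  funext j
  simp only [phiFun, Pi.add_apply]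
  split <;> ring

lemma phiFun_smul (k m : ℕ) (c : ℂ) (x : Eseq) :
    phiFun k m (c • x) = c • phiFun k m x := by
  funext j
  simp only [phiFun, Pi.smul_apply, smul_eq_mul]
  split <;> ring

lemma phiFun_apply0 (m : ℕ) (x : Eseq) (j : Fin (0 + m - 1)) :
    phiFun 0 m x j = x (j.1 + 1) := by
  unfold phiFun
  rw [if_pos rfl]

lemma phiFun_applyk {k : ℕ} (hk : ¬ k = 0) (m : ℕ) (x : Eseq) (j : Fin (k + m - 1)) :
    phiFun k m x j = x (j.1 + 2) - x 1 := by
  unfold phiFun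
  rw [if_neg hk]

lemma Fmap_mem (β : ℂ) (d k m : ℕ) (hd : 2 ≤ d) (hβd : β ^ d = 1) (hβ1 : β ≠ 1)
    (hm : 1 ≤ m) {x : Eseq} (hx : x ∈ Mspace β k m) :
    Fmap β d k m x ∈ Mspace β k m := by
  rw [mem_Mspace_iff] at hx ⊢
  obtain ⟨⟨h0, hP⟩, hH⟩ := hx
  have hb1 : β - 1 ≠ 0 := sub_ne_zero.mpr hβ1
  have hd1 : 1 ≤ d := by omega
  have hpow : x (k + m) ^ d = x k ^ d := by
    have hk : x k = β * x (k + m) := by linear_combination -hH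
    rw [hk, mul_pow, hβd, one_mul]
  refine ⟨⟨Fmap_zero β d k m x, ?_⟩, ?_⟩
  · intro i hi
    rw [Fmap_coord β d k m x (by omega : 1 ≤ i + m),
        Fmap_coord β d k m x (by omega : 1 ≤ i),
        Qmap_coord hd1 h0 (by omega : 1 ≤ i + m),
        Qmap_coord hd1 h0 (by omega : 1 ≤ i)]
    have key : x (i + m - 1) ^ d = x (i - 1) ^ d := by
      by_cases h2 : k + 2 ≤ i
      · have e : i + m - 1 = (i - 1) + m := by omega
        rw [e, hP (i - 1) (by omega)]
      · have e : i = k + 1 := by omega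
        subst e
        have e1 : k + 1 + m - 1 = k + m := by omega
        have e2 : k + 1 - 1 = k := by omega
        rw [e1, e2, hpow]
    rw [key]
  · by_cases hk : k = 0
    · subst hk
      have hFkm : Fmap β d 0 m x (0 + m) = 0 := by
        rw [Fmap_coord β d 0 m x (by omega : 1 ≤ 0 + m)]
        unfold kappa
        rw [if_pos rfl]
        have e : (0 : ℕ) + m = m := by omega
        rw [e, sub_self]
      rw [hFkm, Fmap_zero]
      ring
    · rw [Fmap_coord β d k m x (by omega : 1 ≤ k + m),
          Fmap_coord β d k m x (by omega : 1 ≤ k)]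
      unfold kappa
      rw [if_neg hk]
      field_simp
      ring

lemma psi_mem (β : ℂ) (k m : ℕ) (hβ1 : β ≠ 1) (hm : 1 ≤ m)
    (z : Fin (k + m - 1) → ℂ) : psiFun β k m z ∈ Mspace β k m := by
  have hb1 : β - 1 ≠ 0 := sub_ne_zero.mpr hβ1
  rw [mem_Mspace_iff]
  have h0 : wSeq β k m z 0 = 0 := by
    unfold wSeq
    by_cases hk : k = 0
    · subst hk
      rw [if_pos rfl, if_pos (Nat.zero_le _)]
      unfold coordFin
      rw [dif_neg (by omega)]
    · rw [if_neg hk, if_pos rfl]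
  refine ⟨⟨?_, ?_⟩, ?_⟩
  · show extSeq k m (wSeq β k m z) 0 = 0
    rw [extSeq_agree k m _ (by omega)]
    exact h0
  · exact extSeq_periodic k m hm (wSeq β k m z)
  · show β * extSeq k m (wSeq β k m z) (k + m) - extSeq k m (wSeq β k m z) k = 0
    rw [extSeq_agree k m _ le_rfl, extSeq_agree k m _ (by omega : k ≤ k + m)]
    unfold wSeq
    by_cases hk : k = 0
    · subst hk
      rw [if_pos rfl, if_pos rfl, if_neg (by omega), if_pos (Nat.zero_le _)]
      unfold coordFin
      rw [dif_neg (by omega)]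
      ring
    · rw [if_neg hk, if_neg hk, if_neg (by omega : ¬ k + m = 0), if_neg hk]
      have e : k + m - 1 = k + m - 1 := rfl
      field_simp
      ring

lemma psi_phi (β : ℂ) (k m : ℕ) (hβ1 : β ≠ 1) (hβ0 : β ≠ 0) (hm : 1 ≤ m)
    (hn : 2 ≤ k + m - 1) {x : Eseq} (hx : x ∈ Mspace β k m) :
    psiFun β k m (phiFun k m x) = x := by
  have hb1 : β - 1 ≠ 0 := sub_ne_zero.mpr hβ1
  rw [mem_Mspace_iff] at hx
  obtain ⟨⟨h0, hP⟩, hH⟩ := hx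
  apply periodic_ext_unique k m hm _ _ (extSeq_periodic k m hm _) hP
  intro i hi
  show extSeq k m (wSeq β k m (phiFun k m x)) i = x i
  rw [extSeq_agree k m _ hi]
  unfold wSeq
  by_cases hk : k = 0
  · subst hk
    rw [if_pos rfl]
    by_cases hle : i ≤ 0 + m - 1
    · rw [if_pos hle, coordFin_phi0 m h0 hle]
    · rw [if_neg hle]
      have him : i = 0 + m := by omega
      subst him
      have hxm : x (0 + m) = 0 := by
        have h1 : β * x (0 + m) = 0 := by linear_combination hH + h0
        rcases mul_eq_zero.mp h1 with h | h
        · exact absurd h hβ0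
        · exact h
      exact hxm.symm
  · rw [if_neg hk]
    have hc : (coordFin (phiFun k m x) (k - 1)
        - β * coordFin (phiFun k m x) (k + m - 1)) / (β - 1) = x 1 := by
      rw [coordFin_phik_pred hk x, coordFin_phik_top hk hn x]
      field_simp
      linear_combination -hH
    by_cases hi0 : i = 0
    · subst hi0
      rw [if_pos rfl]
      exact h0.symm
    · rw [if_neg hi0, hc]
      by_cases hi1 : i = 1
      · subst hi1
        have e : coordFin (phiFun k m x) (1 - 1) = 0 := by
          unfold coordFin
          rw [dif_neg (by omega)]
        rw [e, zero_add]
      · rw [coordFin_phik hk x (by omega) (by omega)]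
        have e : i - 1 + 1 = i := by omega
        rw [e]
        ring

lemma phi_psi (β : ℂ) (k m : ℕ) (hm : 1 ≤ m) (hn : 2 ≤ k + m - 1)
    (z : Fin (k + m - 1) → ℂ) : phiFun k m (psiFun β k m z) = z := by
  funext j
  have hj : j.1 < k + m - 1 := j.2
  unfold phiFun
  by_cases hk : k = 0
  · subst hk
    rw [if_pos rfl]
    show extSeq 0 m (wSeq β 0 m z) (j.1 + 1) = z j
    rw [extSeq_agree 0 m _ (by omega)]
    unfold wSeq
    rw [if_pos rfl, if_pos (by omega : j.1 + 1 ≤ 0 + m - 1)]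
    unfold coordFin
    rw [dif_pos ⟨by omega, by omega⟩]
    congr 1
  · rw [if_neg hk]
    show extSeq k m (wSeq β k m z) (j.1 + 2) - extSeq k m (wSeq β k m z) 1 = z j
    rw [extSeq_agree k m _ (by omega), extSeq_agree k m _ (by omega)]
    unfold wSeq
    rw [if_neg hk, if_neg hk, if_neg (by omega : ¬ j.1 + 2 = 0),
        if_neg (by omega : ¬ (1 : ℕ) = 0)]
    have e0 : coordFin z (1 - 1) = 0 := by
      unfold coordFin
      rw [dif_neg (by omega)]
    have e1 : coordFin z (j.1 + 2 - 1) = z j := by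
      unfold coordFin
      rw [dif_pos ⟨by omega, by omega⟩]
      congr 1
    rw [e0, e1]
    ring

lemma conj_eq (β : ℂ) (d k m : ℕ) (hd : 2 ≤ d) (hβ1 : β ≠ 1) (hm : 1 ≤ m)
    (hn : 2 ≤ k + m - 1) {x : Eseq} (hx : x ∈ Mspace β k m) :
    phiFun k m (Fmap β d k m x) = Gmap β d k m (phiFun k m x) := by
  have hb1 : β - 1 ≠ 0 := sub_ne_zero.mpr hβ1
  have hd1 : 1 ≤ d := by omega
  rw [mem_Mspace_iff] at hx
  obtain ⟨⟨h0, hP⟩, hH⟩ := hx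
  funext j
  have hj : j.1 < k + m - 1 := j.2
  by_cases hk : k = 0
  · subst hk
    rw [Gmap_apply0, phiFun_apply0]
    rw [Fmap_coord β d 0 m x (by omega : 1 ≤ j.1 + 1),
        Qmap_coord hd1 h0 (by omega : 1 ≤ j.1 + 1)]
    have hκ : kappa β 0 m (Qmap d x) = x (m - 1) ^ d := by
      unfold kappa
      rw [if_pos rfl, Qmap_coord hd1 h0 (by omega : 1 ≤ m)]
    rw [hκ, coordFin_phi0 m h0 (by omega : j.1 ≤ 0 + m - 1),
        coordFin_phi0 m h0 (by omega : m - 1 ≤ 0 + m - 1)]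
    have e : j.1 + 1 - 1 = j.1 := by omega
    rw [e]
  · rw [Gmap_applyk β d k m hk, phiFun_applyk hk]
    rw [Fmap_coord β d k m x (by omega : 1 ≤ j.1 + 2),
        Fmap_coord β d k m x (by omega : 1 ≤ 1),
        Qmap_coord hd1 h0 (by omega : 1 ≤ j.1 + 2)]
    have hQ1 : Qmap d x 1 = 0 := by
      unfold Qmap
      rw [if_neg (by omega)]
    rw [hQ1]
    have hS : (β * coordFin (phiFun k m x) (k + m - 1)
        - coordFin (phiFun k m x) (k - 1)) / (β - 1) = - x 1 := by
      rw [coordFin_phik_pred hk x, coordFin_phik_top hk hn x]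
      field_simp
      linear_combination hH
    rw [hS]
    have e : j.1 + 2 - 1 = j.1 + 1 := by omega
    rw [e]
    by_cases hj0 : j.1 = 0
    · rw [hj0]
      have e0 : coordFin (phiFun k m x) 0 = 0 := by
        unfold coordFin
        rw [dif_neg (by omega)]
      rw [e0]
      ring
    · rw [coordFin_phik hk x (by omega) (by omega)]
      ring


/-- `F_{k,m} : ℳ_{k,m} → ℳ_{k,m}` and `G_{k,m} : ℂ^{k+m-1} → ℂ^{k+m-1}`
are conjugate by a linear isomorphism `h` with `h ∘ F_{k,m} = G_{k,m} ∘ h` on `ℳ_{k,m}`. -/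
theorem stmt6 (d : ℕ) (hd : 2 ≤ d) (β : ℂ) (hβd : β ^ d = 1) (hβ1 : β ≠ 1)
    (k m : ℕ) (hm : 1 ≤ m) (hn : 2 ≤ k + m - 1) :
    ∃ h : (Mspace β k m) ≃ₗ[ℂ] (Fin (k + m - 1) → ℂ),
      ∀ x : Mspace β k m, ∃ hy : Fmap β d k m ↑x ∈ Mspace β k m,
        h ⟨Fmap β d k m ↑x, hy⟩ = Gmap β d k m (h x) := by
  have hβ0 : β ≠ 0 := by
    intro h
    rw [h, zero_pow (by omega : d ≠ 0)] at hβd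
    exact zero_ne_one hβd
  refine ⟨{ toFun := fun x => phiFun k m x.1
            map_add' := fun a b => phiFun_add k m a.1 b.1
            map_smul' := fun c a => phiFun_smul k m c a.1
            invFun := fun z => ⟨psiFun β k m z, psi_mem β k m hβ1 hm z⟩
            left_inv := fun a => Subtype.ext (psi_phi β k m hβ1 hβ0 hm hn a.2)
            right_inv := fun z => phi_psi β k m hm hn z }, ?_⟩
  intro x
  exact ⟨Fmap_mem β d k m hd hβd hβ1 hm x.2, conj_eq β d k m hd hβ1 hm hn x.2⟩
end
end

section
/- For all pairs (k,m), (k',m') ∈ ℕ × ℕ*: (k',m') ⪯ (k,m) if and only if ℳ_{k',m'} ⊆ ℳ_{k,m}; moreover, if ℳ_{k',m'} ⊆ ℳ_{k,m}, then the restriction of F_{k,m} to ℳ_{k',m'} equals F_{k',m'}. -/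
noncomputable section

lemma memM (β : ℂ) (k m : ℕ) (x : Eseq) :
    x ∈ Mspace β k m ↔ x 0 = 0 ∧ (∀ i, k+1 ≤ i → x (i+m) = x i) ∧ β * x (k+m) - x k = 0 := by
  rw [Mspace, Submodule.mem_inf]
  exact ⟨fun ⟨⟨h0,hP⟩,⟨_,hH⟩⟩ => ⟨h0,hP,hH⟩, fun ⟨h0,hP,hH⟩ => ⟨⟨h0,hP⟩,⟨h0,hH⟩⟩⟩

lemma per_mul (k m : ℕ) (x : Eseq) (hx : ∀ i, k+1 ≤ i → x (i+m) = x i)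
    (i t : ℕ) (hi : k+1 ≤ i) : x (i + t*m) = x i := by
  induction t with
  | zero => simp
  | succ t ih =>
    have h := hx (i + t*m) (by omega)
    rw [show i + (t+1)*m = i + t*m + m by ring, h, ih]

lemma per_congr (k m : ℕ) (x : Eseq) (hx : ∀ i, k+1 ≤ i → x (i+m) = x i)
    (i j : ℕ) (hi : k+1 ≤ i) (hj : k+1 ≤ j) (hij : i % m = j % m) : x i = x j := by
  rcases Nat.le_total i j with h | h
  · obtain ⟨t, ht⟩ : m ∣ (j - i) := (Nat.modEq_iff_dvd' h).1 hij
    rw [show j = i + t*m by rw [Nat.mul_comm t m]; omega, per_mul k m x hx i t hi]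
  · obtain ⟨t, ht⟩ : m ∣ (i - j) := (Nat.modEq_iff_dvd' h).1 hij.symm
    rw [show i = j + t*m by rw [Nat.mul_comm t m]; omega, per_mul k m x hx j t hj]

lemma M0_congr (β : ℂ) (hβ0 : β ≠ 0) (m : ℕ) (hm : 1 ≤ m) (x : Eseq)
    (h0 : x 0 = 0) (hP : ∀ i, 0+1 ≤ i → x (i+m) = x i) (hH : β * x (0+m) - x 0 = 0) :
    ∀ i j, i % m = j % m → x i = x j := by
  have hxm : x m = 0 := by
    rw [h0, zero_add, sub_zero] at hH
    rcases mul_eq_zero.1 hH with h | h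
    · exact absurd h hβ0
    · exact h
  have hz : ∀ i, i % m = 0 → x i = 0 := by
    intro i hi
    rcases Nat.eq_zero_or_pos i with h | h
    · rw [h, h0]
    · rw [per_congr 0 m x hP i m (by omega) (by omega) (by rw [hi, Nat.mod_self]), hxm]
  intro i j hij
  by_cases h : i % m = 0
  · rw [hz i h, hz j (hij ▸ h)]
  · have hi : 1 ≤ i := Nat.pos_of_ne_zero (fun h' => h (by subst h'; simpa using rfl))
    have hj : 1 ≤ j := Nat.pos_of_ne_zero (fun h' => h (by subst h'; simpa using hij))
    exact per_congr 0 m x hP i j hi hj hij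


lemma qmap_eq (d : ℕ) (hd : 1 ≤ d) (x : Eseq) (hx0 : x 0 = 0) (i : ℕ) (hi : 1 ≤ i) :
    Qmap d x i = (x (i-1)) ^ d := by
  unfold Qmap
  rcases Nat.lt_or_ge i 2 with h | h
  · interval_cases i
    simp [hx0, zero_pow (by omega : d ≠ 0)]
  · simp [h]

lemma mod_eq_of (m' a b : ℕ) (h : a ≤ b) (hd : m' ∣ b - a) : a % m' = b % m' :=
  (Nat.modEq_iff_dvd' h).2 hd

def wit1 (k' m' r : ℕ) : Eseq := fun i => if k'+1 ≤ i ∧ i % m' = r then (1:ℂ) else 0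
def wit2 (β : ℂ) (k' m' : ℕ) : Eseq :=
  fun i => if i = k' then (1:ℂ) else if k'+1 ≤ i ∧ i % m' = k' % m' then β⁻¹ else 0
def wit3 (β : ℂ) (k' : ℕ) : Eseq :=
  fun i => if i = 0 then (0:ℂ) else if i = k' then β else if k'+1 ≤ i then 1 else 0
def wit4 (m' : ℕ) : Eseq := fun i => if i % m' = 0 then (0:ℂ) else 1

lemma rev_dir (β : ℂ) (hβ0 : β ≠ 0) (hβ1 : β ≠ 1)
    (k m k' m' : ℕ) (hm : 1 ≤ m) (hm' : 1 ≤ m')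
    (hle : Mspace β k' m' ≤ Mspace β k m) :
    m' ∣ m ∧ (k' = k ∨ (k' = 0 ∧ m' ∣ k)) := by
  -- step 1 : m' ∣ m
  have hdvd : m' ∣ m := by
    by_cases hm'1 : m' = 1
    · exact hm'1 ▸ one_dvd m
    · have hm'2 : 2 ≤ m' := by omega
      set r := (k' + 1) % m' with hr
      have hrlt : r < m' := Nat.mod_lt _ (by omega)
      have hrne : r ≠ k' % m' := by
        intro h
        have : m' ∣ (k' + 1) - k' := (Nat.modEq_iff_dvd' (Nat.le_succ k')).1 (h.symm)
        simp at this
        omega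
      have hw : wit1 k' m' r ∈ Mspace β k' m' := by
        rw [memM]
        refine ⟨by simp [wit1], ?_, ?_⟩
        · intro i hi
          simp only [wit1, Nat.add_mod_right]
          have : k' + 1 ≤ i + m' := by omega
          simp [hi, this]
        · have h1 : wit1 k' m' r k' = 0 := by simp [wit1]
          have h2 : wit1 k' m' r (k' + m') = 0 := by
            simp only [wit1, Nat.add_mod_right]
            rw [if_neg]
            exact fun hc => hrne hc.2.symm
          rw [h1, h2]; ring
      have hw2 := (memM _ _ _ _).1 (hle hw)
      set i := r + m' * (k + k' + 1) with hi
      have key : k + k' + 1 ≤ m' * (k + k' + 1) := Nat.le_mul_of_pos_left _ (by omega)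
      have hik : k + 1 ≤ i := by omega
      have hik' : k' + 1 ≤ i := by omega
      have himod : i % m' = r := by
        rw [hi, Nat.add_mul_mod_self_left, Nat.mod_eq_of_lt hrlt]
      have h1 : wit1 k' m' r i = 1 := by simp [wit1, hik', himod]
      have h2 := hw2.2.1 i hik
      rw [h1] at h2
      by_cases hc : k' + 1 ≤ i + m ∧ (i + m) % m' = r
      · have : m' ∣ (i + m) - i := (Nat.modEq_iff_dvd' (by omega)).1 (by
          show i % m' = (i + m) % m'
          rw [himod, hc.2])
        simpa using this
      · simp [wit1, hc] at h2; exact absurd ⟨by omega, h2.2⟩ hc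
  refine ⟨hdvd, ?_⟩
  obtain ⟨t, ht⟩ := hdvd
  by_cases hkk : k' = k
  · exact Or.inl hkk
  -- rule out k < k'
  have hgt : ¬ k < k' := by
    intro hlt
    have hk'1 : 1 ≤ k' := by omega
    have hv : wit2 β k' m' ∈ Mspace β k' m' := by
      rw [memM]
      refine ⟨by simp [wit2]; omega, ?_, ?_⟩
      · intro i hi
        have h1 : i ≠ k' := by omega
        have h2 : i + m' ≠ k' := by omega
        have h3 : k' + 1 ≤ i + m' := by omega
        simp only [wit2, h1, h2, if_false, Nat.add_mod_right]
        simp [hi, h3]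
      · have h1 : wit2 β k' m' k' = 1 := by simp [wit2]
        have h2 : wit2 β k' m' (k' + m') = β⁻¹ := by
          have : k' + m' ≠ k' := by omega
          simp [wit2, this, Nat.add_mod_right]
          rw [if_neg (by omega), if_pos (by omega)]
        rw [h1, h2, mul_inv_cancel₀ hβ0]; ring
    have hv2 := (memM _ _ _ _).1 (hle hv)
    have hP := hv2.2.1 k' (by omega)
    have h1 : wit2 β k' m' k' = 1 := by simp [wit2]
    have h2 : wit2 β k' m' (k' + m) = β⁻¹ := by
      have hne : k' + m ≠ k' := by omega
      have hmod : (k' + m) % m' = k' % m' := by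
        rw [ht, Nat.add_mul_mod_self_left]
      simp [wit2, hne, hmod]
      rw [if_neg (by omega), if_pos (by omega)]
    rw [h1, h2] at hP
    exact hβ1 (inv_eq_one.mp hP)
  have hlt : k' < k := by omega
  -- rule out 1 ≤ k'
  have hk'0 : k' = 0 := by
    by_contra hk'ne
    have hk'1 : 1 ≤ k' := by omega
    have hu : wit3 β k' ∈ Mspace β k' m' := by
      rw [memM]
      refine ⟨by simp [wit3], ?_, ?_⟩
      · intro i hi
        have h0 : i ≠ 0 := by omega
        have h0' : i + m' ≠ 0 := by omega
        have h1 : i ≠ k' := by omega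
        have h2 : i + m' ≠ k' := by omega
        have h3 : k' + 1 ≤ i + m' := by omega
        simp [wit3, h0, h0', h1, h2, h3, hi]
      · have h1 : wit3 β k' k' = β := by have e0 : k' ≠ 0 := by omega
                                         simp [wit3, e0]
        have h2 : wit3 β k' (k' + m') = 1 := by
          have e0 : k' + m' ≠ 0 := by omega
          have e1 : k' + m' ≠ k' := by omega
          simp [wit3, e0, e1]; rw [if_neg (by omega), if_neg (by omega), if_pos (by omega)]
        rw [h1, h2]; ring
    have hu2 := (memM _ _ _ _).1 (hle hu)
    have hH := hu2.2.2
    have h1 : wit3 β k' k = 1 := by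
      have e0 : k ≠ 0 := by omega
      have e1 : k ≠ k' := by omega
      simp [wit3, e0, e1]; omega
    have h2 : wit3 β k' (k + m) = 1 := by
      have e0 : k + m ≠ 0 := by omega
      have e1 : k + m ≠ k' := by omega
      simp [wit3, e0, e1]; rw [if_neg (by omega), if_pos (by omega)]
    rw [h1, h2, mul_one] at hH
    exact hβ1 (by linear_combination hH)
  subst hk'0
  refine Or.inr ⟨rfl, ?_⟩
  -- m' ∣ k
  have hs : wit4 m' ∈ Mspace β 0 m' := by
    rw [memM]
    refine ⟨by simp [wit4], ?_, ?_⟩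
    · intro i hi
      simp [wit4, Nat.add_mod_right]
    · have h1 : wit4 m' (0 + m') = 0 := by simp [wit4]
      have h2 : wit4 m' 0 = 0 := by simp [wit4]
      rw [h1, h2]; ring
  have hs2 := (memM _ _ _ _).1 (hle hs)
  have hH := hs2.2.2
  have hmod : (k + m) % m' = k % m' := by rw [ht, Nat.add_mul_mod_self_left]
  by_cases hk : k % m' = 0
  · exact Nat.dvd_of_mod_eq_zero hk
  · exfalso
    have h1 : wit4 m' k = 1 := by simp [wit4, hk]
    have h2 : wit4 m' (k + m) = 1 := by simp [wit4, hmod, hk]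
    rw [h1, h2, mul_one] at hH
    exact hβ1 (by linear_combination hH)

lemma fwd_dir (β : ℂ) (hβ0 : β ≠ 0) (k m k' m' : ℕ) (hm : 1 ≤ m) (hm' : 1 ≤ m')
    (hdvd : m' ∣ m) (hcase : k' = k ∨ (k' = 0 ∧ m' ∣ k)) :
    Mspace β k' m' ≤ Mspace β k m := by
  obtain ⟨t, ht⟩ := hdvd
  intro x hx
  rw [memM] at hx ⊢
  obtain ⟨h0, hP, hH⟩ := hx
  have hcase' : k' = k ∨ (k' = 0 ∧ ∃ a, k = m' * a) := by
    rcases hcase with h | ⟨h1, h2⟩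
    · exact Or.inl h
    · exact Or.inr ⟨h1, h2⟩
  rcases hcase' with h | ⟨h, a, ha⟩
  · subst h
    refine ⟨h0, ?_, ?_⟩
    · intro i hi
      rw [ht, Nat.mul_comm m' t]
      exact per_mul k' m' x hP i t hi
    · have he : x (k' + m) = x (k' + m') := per_congr k' m' x hP _ _ (by omega) (by omega)
        (by rw [ht, Nat.add_mul_mod_self_left, Nat.add_mod_right])
      rw [he]; exact hH
  · subst h
    have hcong := M0_congr β hβ0 m' hm' x h0 hP hH
    refine ⟨h0, ?_, ?_⟩
    · intro i hi
      exact hcong _ _ (by rw [ht, Nat.add_mul_mod_self_left])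
    · have h1 : x (k + m) = x 0 := hcong _ _
        (by rw [ht, ha, Nat.zero_mod, ← Nat.mul_add, Nat.mul_mod_right])
      have h2 : x k = x 0 := hcong _ _ (by rw [ha, Nat.zero_mod, Nat.mul_mod_right])
      rw [h1, h2, h0]; ring





lemma kappa_zero (β : ℂ) (m : ℕ) (x : Eseq) : kappa β 0 m x = x m := by simp [kappa]

lemma kappa_ne (β : ℂ) (k m : ℕ) (x : Eseq) (hk : k ≠ 0) :
    kappa β k m x = (β * x (k + m) - x k) / (β - 1) := by simp [kappa, hk]

lemma kappa_eq (d : ℕ) (hd : 2 ≤ d) (β : ℂ) (hβd : β ^ d = 1) (hβ0 : β ≠ 0) (hβ1 : β ≠ 1)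
    (k m k' m' : ℕ) (hm : 1 ≤ m) (hm' : 1 ≤ m')
    (hdvd : m' ∣ m) (hcase : k' = k ∨ (k' = 0 ∧ m' ∣ k))
    (x : Eseq) (hx : x ∈ Mspace β k' m') :
    kappa β k m (Qmap d x) = kappa β k' m' (Qmap d x) := by
  rw [memM] at hx
  obtain ⟨h0, hP, hH⟩ := hx
  have hq : ∀ i, 1 ≤ i → Qmap d x i = x (i-1) ^ d := qmap_eq d (by omega) x h0
  have hβ1' : β - 1 ≠ 0 := sub_ne_zero.mpr hβ1
  have hm'le : m' ≤ m := Nat.le_of_dvd (by omega) hdvd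
  by_cases hkk : k' = k
  · subst hkk
    by_cases hk0 : k' = 0
    · subst hk0
      have hcong := M0_congr β hβ0 m' hm' x h0 hP hH
      rw [kappa_zero, kappa_zero]
      rw [hq m hm, hq m' hm']
      have he : x (m - 1) = x (m' - 1) := hcong _ _
        (mod_eq_of m' (m' - 1) (m - 1) (by omega)
          (by rw [show m - 1 - (m' - 1) = m - m' by omega]
              exact Nat.dvd_sub hdvd dvd_rfl)).symm
      rw [he]
    · rw [kappa_ne _ _ _ _ hk0, kappa_ne _ _ _ _ hk0]
      have key : Qmap d x (k' + m) = Qmap d x (k' + m') := by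
        rw [hq _ (by omega), hq _ (by omega)]
        by_cases hm'1 : m' = 1
        · subst hm'1
          rw [show k' + 1 - 1 = k' from rfl]
          by_cases hm1 : m = 1
          · simp [hm1]
          · have e1 : x (k' + m - 1) = x (k' + 1) := per_congr k' 1 x hP _ _ (by omega) (by omega)
              (by simp [Nat.mod_one])
            have e2 : x k' = β * x (k' + 1) := by linear_combination -hH
            rw [e1, e2, mul_pow, hβd, one_mul]
        · have hm'2 : 2 ≤ m' := by omega
          have e1 : x (k' + m - 1) = x (k' + m' - 1) := per_congr k' m' x hP _ _ (by omega) (by omega)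
            (mod_eq_of m' (k' + m' - 1) (k' + m - 1) (by omega)
              (by rw [show k' + m - 1 - (k' + m' - 1) = m - m' by omega]
                  exact Nat.dvd_sub hdvd dvd_rfl)).symm
          rw [e1]
      rw [key]
  · have h2 : k' = 0 ∧ m' ∣ k := by
      rcases hcase with h | h
      · exact absurd h hkk
      · exact h
    obtain ⟨rfl, hdk⟩ := h2
    have hk0 : k ≠ 0 := fun h => hkk h.symm
    have hm'k : m' ≤ k := Nat.le_of_dvd (by omega) hdk
    have hcong := M0_congr β hβ0 m' hm' x h0 hP hH
    rw [kappa_ne _ _ _ _ hk0, kappa_zero]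
    rw [hq (k + m) (by omega), hq k (by omega), hq m' hm']
    have e1 : x (k + m - 1) = x (m' - 1) := hcong _ _
      (mod_eq_of m' (m' - 1) (k + m - 1) (by omega)
        (by rw [show k + m - 1 - (m' - 1) = (k - m') + m by omega]
            exact Nat.dvd_add (Nat.dvd_sub hdk dvd_rfl) hdvd)).symm
    have e2 : x (k - 1) = x (m' - 1) := hcong _ _
      (mod_eq_of m' (m' - 1) (k - 1) (by omega)
        (by rw [show k - 1 - (m' - 1) = k - m' by omega]
            exact Nat.dvd_sub hdk dvd_rfl)).symm
    rw [e1, e2, div_eq_iff hβ1']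
    ring

/-- `(k',m') ⪯ (k,m) ↔ ℳ_{k',m'} ⊆ ℳ_{k,m}`; and if `ℳ_{k',m'} ⊆ ℳ_{k,m}`
then `F_{k,m}` restricted to `ℳ_{k',m'}` equals `F_{k',m'}`. -/
theorem stmt7 (d : ℕ) (hd : 2 ≤ d) (β : ℂ) (hβd : β ^ d = 1) (hβ1 : β ≠ 1)
    (k m k' m' : ℕ) (hm : 1 ≤ m) (hm' : 1 ≤ m') :
    ((m' ∣ m ∧ (k' = k ∨ (k' = 0 ∧ m' ∣ k))) ↔ Mspace β k' m' ≤ Mspace β k m) ∧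
    (Mspace β k' m' ≤ Mspace β k m →
      ∀ x ∈ Mspace β k' m', Fmap β d k m x = Fmap β d k' m' x) := by
  have hβ0 : β ≠ 0 := by
    intro h
    rw [h, zero_pow (by omega : d ≠ 0)] at hβd
    exact zero_ne_one hβd
  constructor
  · constructor
    · rintro ⟨hdvd, hcase⟩
      exact fwd_dir β hβ0 k m k' m' hm hm' hdvd hcase
    · exact rev_dir β hβ0 hβ1 k m k' m' hm hm'
  · intro hle x hx
    obtain ⟨hdvd, hcase⟩ := rev_dir β hβ0 hβ1 k m k' m' hm hm' hle
    have hk := kappa_eq d hd β hβd hβ0 hβ1 k m k' m' hm hm' hdvd hcase x hx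
    funext i
    by_cases hi : i = 0
    · simp [Fmap, projH, hi]
    · simp [Fmap, projH, hi, hk]
end
end

section
/- For every (k,m) ∈ ℕ × ℕ*, the critical set of F_{k,m} : ℳ_{k,m} → ℳ_{k,m} equals {x ∈ ℳ_{k,m} : x_i = 0 for some 1 ≤ i ≤ k+m−1}; that is, the derivative D_x F_{k,m} : ℳ_{k,m} → ℳ_{k,m} fails to be injective if and only if x_i = 0 for some index i with 1 ≤ i ≤ k+m−1. -/
noncomputable section

lemma mem_P_iff (k m : ℕ) (x : Eseq) :
    x ∈ Pspace k m ↔ x 0 = 0 ∧ ∀ i, k + 1 ≤ i → x (i + m) = x i := Iff.rfl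
lemma mem_H_iff (β : ℂ) (k m : ℕ) (x : Eseq) :
    x ∈ Hspace β k m ↔ x 0 = 0 ∧ β * x (k + m) - x k = 0 := Iff.rfl

def Dq (d : ℕ) (x v : Eseq) : Eseq :=
  fun j => if 2 ≤ j then (d : ℂ) * x (j - 1) ^ (d - 1) * v (j - 1) else 0

lemma hasDerivAt_Q (d : ℕ) (x v : Eseq) (j : ℕ) :
    HasDerivAt (fun t : ℂ => Qmap d (x + t • v) j) (Dq d x v j) 0 := by
  by_cases hj : 2 ≤ j
  · have he : (fun t : ℂ => Qmap d (x + t • v) j)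
        = fun t : ℂ => (x (j - 1) + t * v (j - 1)) ^ d := by
      funext t; simp [Qmap, hj]
    rw [he, show Dq d x v j = (d : ℂ) * x (j - 1) ^ (d - 1) * v (j - 1) from by simp [Dq, hj]]
    have h1 : HasDerivAt (fun t : ℂ => x (j - 1) + t * v (j - 1)) (v (j - 1)) 0 := by
      simpa using (hasDerivAt_mul_const (v (j - 1))).const_add (x (j - 1))
    simpa using h1.fun_pow d
  · have he : (fun t : ℂ => Qmap d (x + t • v) j) = fun _ : ℂ => (0 : ℂ) := by
      funext t; simp [Qmap, hj]
    rw [he, show Dq d x v j = 0 from by simp [Dq, hj]]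
    exact hasDerivAt_const 0 0

lemma hasDerivAt_kappa (β : ℂ) (d k m : ℕ) (x v : Eseq) :
    HasDerivAt (fun t : ℂ => kappa β k m (Qmap d (x + t • v)))
      (kappa β k m (Dq d x v)) 0 := by
  by_cases hk : k = 0
  · have he : (fun t : ℂ => kappa β k m (Qmap d (x + t • v)))
        = fun t : ℂ => Qmap d (x + t • v) m := by funext t; simp [kappa, hk]
    rw [he, show kappa β k m (Dq d x v) = Dq d x v m from by simp [kappa, hk]]
    exact hasDerivAt_Q d x v m
  · have he : (fun t : ℂ => kappa β k m (Qmap d (x + t • v)))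
        = fun t : ℂ => (β * Qmap d (x + t • v) (k + m) - Qmap d (x + t • v) k) / (β - 1) := by
      funext t; simp [kappa, hk]
    rw [he, show kappa β k m (Dq d x v)
        = (β * Dq d x v (k + m) - Dq d x v k) / (β - 1) from by simp [kappa, hk]]
    exact (((hasDerivAt_Q d x v (k + m)).const_mul β).sub (hasDerivAt_Q d x v k)).div_const _

lemma deriv_Fmap (β : ℂ) (d k m : ℕ) (x v : Eseq) (i : ℕ) :
    deriv (fun t : ℂ => Fmap β d k m (x + t • v) i) 0 = projH β k m (Dq d x v) i := by
  by_cases hi : i = 0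
  · have he : (fun t : ℂ => Fmap β d k m (x + t • v) i) = fun _ : ℂ => (0 : ℂ) := by
      funext t; simp [Fmap, projH, hi]
    rw [he, show projH β k m (Dq d x v) i = 0 from by simp [projH, hi]]
    simp
  · have he : (fun t : ℂ => Fmap β d k m (x + t • v) i)
        = fun t : ℂ => Qmap d (x + t • v) i - kappa β k m (Qmap d (x + t • v)) := by
      funext t; simp [Fmap, projH, hi]
    rw [he, show projH β k m (Dq d x v) i = Dq d x v i - kappa β k m (Dq d x v) from
      by simp [projH, hi]]
    exact ((hasDerivAt_Q d x v i).sub (hasDerivAt_kappa β d k m x v)).deriv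

lemma mk_mem_M (β : ℂ) (k m : ℕ) (v : Eseq) (h0 : v 0 = 0)
    (hper : ∀ i, k + 1 ≤ i → v (i + m) = v i) (hH : β * v (k + m) - v k = 0) :
    v ∈ Mspace β k m := Submodule.mem_inf.mpr ⟨⟨h0, hper⟩, ⟨h0, hH⟩⟩

lemma kernel_vec (β : ℂ) (hβ : β ≠ 0) (k m : ℕ) (hm : 1 ≤ m) (x : Eseq)
    (hx : x ∈ Mspace β k m) (i0 : ℕ) (h1 : 1 ≤ i0) (h2 : i0 ≤ k + m - 1) (h0 : x i0 = 0) :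
    ∃ v : Eseq, v ∈ Mspace β k m ∧ v i0 ≠ 0 ∧ ∀ s, v s ≠ 0 → x s = 0 := by
  obtain ⟨hP, hH⟩ := Submodule.mem_inf.mp (show x ∈ Pspace k m ⊓ Hspace β k m from hx)
  obtain ⟨hx0, hxper⟩ := (mem_P_iff k m x).mp hP
  obtain ⟨-, hxH⟩ := (mem_H_iff β k m x).mp hH
  rcases lt_trichotomy i0 k with hik | hik | hik
  · -- i0 < k : v = indicator of {i0}
    refine ⟨fun j => if j = i0 then 1 else 0, mk_mem_M β k m _ ?_ ?_ ?_, ?_, ?_⟩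
    · exact if_neg (by omega)
    · intro i hi
      rw [if_neg (by omega), if_neg (by omega)]
    · rw [if_neg (by omega), if_neg (by omega)]; ring
    · dsimp only; rw [if_pos rfl]; exact one_ne_zero
    · intro s hs; dsimp only at hs
      by_cases h : s = i0
      · rw [h]; exact h0
      · rw [if_neg h] at hs; exact absurd rfl hs
  · -- i0 = k
    have hxk : x k = 0 := hik ▸ h0
    have hxall : ∀ t, x (k + t * m) = 0 := by
      intro t
      induction t with
      | zero => simpa using hxk
      | succ n ih =>
        rcases Nat.eq_zero_or_pos n with hn | hn
        · subst hn
          rw [hxk, sub_zero] at hxH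
          have := (mul_eq_zero.mp hxH).resolve_left hβ
          simpa using this
        · have hle : k + 1 ≤ k + n * m := Nat.add_le_add_left (Nat.mul_pos hn hm) k
          rw [show k + (n + 1) * m = (k + n * m) + m from by ring, hxper _ hle]
          exact ih
    refine ⟨fun j => if j = k then 1 else if k + m ≤ j ∧ (j - k) % m = 0 then β⁻¹ else 0,
      mk_mem_M β k m _ ?_ ?_ ?_, ?_, ?_⟩
    · rw [if_neg (by omega), if_neg (fun h => by omega)]
    · intro i hi
      have e2 : (i + m - k) % m = (i - k) % m := by
        rw [show i + m - k = (i - k) + m from by omega, Nat.add_mod_right]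
      by_cases hr : (i - k) % m = 0
      · have him : k + m ≤ i := by
          by_contra hlt
          push_neg at hlt
          rw [Nat.mod_eq_of_lt (by omega : i - k < m)] at hr
          omega
        rw [if_neg (by omega), if_pos ⟨by omega, by rw [e2]; exact hr⟩,
          if_neg (by omega), if_pos ⟨him, hr⟩]
      · rw [if_neg (by omega), if_neg (fun h => hr (e2 ▸ h.2)),
          if_neg (by omega), if_neg (fun h => hr h.2)]
    · rw [if_neg (by omega), if_pos ⟨le_refl _, by rw [show k + m - k = m from by omega,
        Nat.mod_self]⟩, if_pos rfl, mul_inv_cancel₀ hβ]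
      ring
    · dsimp only; rw [hik, if_pos rfl]; exact one_ne_zero
    · intro s hs; dsimp only at hs
      by_cases h : s = k
      · rw [h]; exact hxk
      · rw [if_neg h] at hs
        by_cases hcond : k + m ≤ s ∧ (s - k) % m = 0
        · obtain ⟨t, ht⟩ := Nat.dvd_of_mod_eq_zero hcond.2
          have hks : k ≤ s := by omega
          rw [← Nat.add_sub_cancel' hks, ht, Nat.mul_comm]
          exact hxall t
        · rw [if_neg hcond] at hs; exact absurd rfl hs
  · -- k < i0
    have hxall : ∀ t, x (i0 + t * m) = 0 := by
      intro t
      induction t with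
      | zero => simpa using h0
      | succ n ih =>
        have hle : k + 1 ≤ i0 + n * m := le_trans (by omega) (Nat.le_add_right _ _)
        rw [show i0 + (n + 1) * m = (i0 + n * m) + m from by ring, hxper _ hle]
        exact ih
    refine ⟨fun j => if i0 ≤ j ∧ (j - i0) % m = 0 then 1 else 0,
      mk_mem_M β k m _ ?_ ?_ ?_, ?_, ?_⟩
    · exact if_neg (fun h => by omega)
    · intro i hi
      rcases le_or_gt i0 i with hle | hlt
      · have e2 : (i + m - i0) % m = (i - i0) % m := by
          rw [show i + m - i0 = (i - i0) + m from by omega, Nat.add_mod_right]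
        by_cases hr : (i - i0) % m = 0
        · rw [if_pos ⟨by omega, by rw [e2]; exact hr⟩, if_pos ⟨hle, hr⟩]
        · rw [if_neg (fun h => hr (e2 ▸ h.2)), if_neg (fun h => hr h.2)]
      · rw [if_neg (fun h => absurd h.2 (by
            rw [Nat.mod_eq_of_lt (show i + m - i0 < m from by omega)]; omega)),
          if_neg (fun h => by omega)]
    · rw [if_neg (fun h => absurd h.2 (by
          rw [Nat.mod_eq_of_lt (show k + m - i0 < m from by omega)]; omega)),
        if_neg (fun h => by omega)]
      ring
    · dsimp only
      rw [if_pos ⟨le_refl _, by rw [Nat.sub_self, Nat.zero_mod]⟩]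
      exact one_ne_zero
    · intro s hs; dsimp only at hs
      by_cases hcond : i0 ≤ s ∧ (s - i0) % m = 0
      · obtain ⟨t, ht⟩ := Nat.dvd_of_mod_eq_zero hcond.2
        rw [← Nat.add_sub_cancel' hcond.1, ht, Nat.mul_comm]
        exact hxall t
      · rw [if_neg hcond] at hs; exact absurd rfl hs

/-- the critical set of `F_{k,m}` on `ℳ_{k,m}` is
`{x ∈ ℳ_{k,m} : x_i = 0 for some 1 ≤ i ≤ k+m−1}`: the derivative `D_x F_{k,m}` fails to
be injective iff some coordinate `x_i`, `1 ≤ i ≤ k+m−1`, vanishes. -/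
theorem stmt8 (d : ℕ) (hd : 2 ≤ d) (β : ℂ) (hβd : β ^ d = 1) (hβ1 : β ≠ 1)
    (k m : ℕ) (hm : 1 ≤ m) (x : Eseq) (hx : x ∈ Mspace β k m)
    (L : Mspace β k m →ₗ[ℂ] Mspace β k m) (hL : IsDerivAt β d k m x L) :
    ¬ Function.Injective L ↔ ∃ i, 1 ≤ i ∧ i ≤ k + m - 1 ∧ x i = 0 := by
  have hβ0 : β ≠ 0 := by
    intro h
    rw [h, zero_pow (by omega : d ≠ 0)] at hβd
    exact zero_ne_one hβd
  have hd1 : d - 1 ≠ 0 := by omega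
  have hdC : (d : ℂ) ≠ 0 := Nat.cast_ne_zero.mpr (by omega)
  have hLcoord : ∀ v : Mspace β k m, ∀ i : ℕ,
      ((L v : Eseq)) i = projH β k m (Dq d x (v : Eseq)) i :=
    fun v i => (hL v i).trans (deriv_Fmap β d k m x (v : Eseq) i)
  constructor
  · -- not injective → some coordinate vanishes
    intro hninj
    by_contra hno
    push_neg at hno
    apply hninj
    apply (injective_iff_map_eq_zero L).mpr
    intro w hw
    have hz : ∀ i : ℕ, projH β k m (Dq d x (w : Eseq)) i = 0 := by
      intro i
      rw [← hLcoord w i, hw]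
      rfl
    have hc : kappa β k m (Dq d x (w : Eseq)) = 0 := by
      have h := hz 1
      rw [show projH β k m (Dq d x (w : Eseq)) 1
          = Dq d x (w : Eseq) 1 - kappa β k m (Dq d x (w : Eseq)) from by simp [projH],
        show Dq d x (w : Eseq) 1 = 0 from by simp [Dq], zero_sub, neg_eq_zero] at h
      exact h
    have hw1 : ∀ s, 1 ≤ s → s ≤ k + m - 1 → (w : Eseq) s = 0 := by
      intro s hs1 hs2
      have h := hz (s + 1)
      rw [show projH β k m (Dq d x (w : Eseq)) (s + 1)
          = Dq d x (w : Eseq) (s + 1) - kappa β k m (Dq d x (w : Eseq)) from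
          by simp [projH], hc, sub_zero,
        show Dq d x (w : Eseq) (s + 1) = (d : ℂ) * x s ^ (d - 1) * (w : Eseq) s from
          by simp [Dq, show 2 ≤ s + 1 from by omega]] at h
      rcases mul_eq_zero.mp h with h' | h'
      · rcases mul_eq_zero.mp h' with h'' | h''
        · exact absurd h'' hdC
        · exact absurd (pow_eq_zero_iff hd1 |>.mp h'') (hno s hs1 hs2)
      · exact h'
    obtain ⟨hPw, hHw⟩ :=
      Submodule.mem_inf.mp (show (w : Eseq) ∈ Pspace k m ⊓ Hspace β k m from w.2)
    obtain ⟨hw0, hwper⟩ := (mem_P_iff k m _).mp hPw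
    obtain ⟨-, hwH⟩ := (mem_H_iff β k m _).mp hHw
    have hwall : ∀ s, (w : Eseq) s = 0 := by
      intro s
      induction s using Nat.strong_induction_on with
      | _ s ih =>
        rcases Nat.eq_zero_or_pos s with hs | hs
        · rw [hs]; exact hw0
        rcases le_or_gt s (k + m - 1) with hsle | hsgt
        · exact hw1 s hs hsle
        rcases eq_or_lt_of_le (show k + m ≤ s from by omega) with hseq | hslt
        · -- s = k + m
          have hwk : (w : Eseq) k = 0 := by
            rcases Nat.eq_zero_or_pos k with hk | hk
            · subst hk; exact hw0
            · exact hw1 k hk (by omega)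
          rw [hwk, sub_zero] at hwH
          rw [← hseq]
          exact (mul_eq_zero.mp hwH).resolve_left hβ0
        · have h := hwper (s - m) (by omega)
          rw [show s - m + m = s from by omega] at h
          rw [h]
          exact ih (s - m) (by omega)
    exact Subtype.ext (funext hwall)
  · -- some coordinate vanishes → not injective
    rintro ⟨i0, hi1, hi2, hi0⟩ hinj
    obtain ⟨v, hvM, hvi0, hvsupp⟩ := kernel_vec β hβ0 k m hm x hx i0 hi1 hi2 hi0
    have hDq : Dq d x v = (fun _ => (0 : ℂ)) := by
      funext j
      by_cases hj : 2 ≤ j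
      · rw [show Dq d x v j = (d : ℂ) * x (j - 1) ^ (d - 1) * v (j - 1) from by simp [Dq, hj]]
        by_cases hv : v (j - 1) = 0
        · rw [hv, mul_zero]
        · rw [hvsupp _ hv, zero_pow hd1, mul_zero, zero_mul]
      · simp [Dq, hj]
    have hL0 : L ⟨v, hvM⟩ = 0 := by
      apply Subtype.ext
      funext i
      rw [show ((L ⟨v, hvM⟩ : Mspace β k m) : Eseq) i = projH β k m (Dq d x v) i from
        hLcoord ⟨v, hvM⟩ i, hDq]
      simp [projH, kappa]
    have hv0 : (⟨v, hvM⟩ : Mspace β k m) = 0 := hinj (by rw [hL0, map_zero])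
    exact hvi0 (by simpa using congrFun (congrArg Subtype.val hv0) i0)
end
end

section
/- For every (k,m) ∈ ℕ × ℕ*: (i) the image F_{k,m}(C(F_{k,m})) of the critical set is contained in Δ_{k,m}; (ii) F_{k,m}(Δ_{k,m}) ⊆ Δ_{k,m}; and consequently (iii) the post-critical set PC(F_{k,m}) = ⋃_{j≥1} F_{k,m}^{∘j}(C(F_{k,m})) is contained in Δ_{k,m}. -/
noncomputable section

section Stmt9Aux
variable {β : ℂ} {d k m : ℕ}

lemma memM_zero {x : Eseq} (hx : x ∈ Mspace β k m) : x 0 = 0 :=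
  (Submodule.mem_inf.mp hx).1.1

lemma memM_per {x : Eseq} (hx : x ∈ Mspace β k m) : ∀ i, k + 1 ≤ i → x (i + m) = x i :=
  (Submodule.mem_inf.mp hx).1.2

lemma memM_H {x : Eseq} (hx : x ∈ Mspace β k m) : β * x (k + m) - x k = 0 :=
  (Submodule.mem_inf.mp hx).2.2

lemma memM_of {x : Eseq} (h0 : x 0 = 0) (hp : ∀ i, k + 1 ≤ i → x (i + m) = x i)
    (hH : β * x (k + m) - x k = 0) : x ∈ Mspace β k m :=
  Submodule.mem_inf.mpr ⟨⟨h0, hp⟩, ⟨h0, hH⟩⟩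

lemma beta_ne_zero (hd : 2 ≤ d) (hβd : β ^ d = 1) : β ≠ 0 := by
  intro h
  rw [h, zero_pow (by omega)] at hβd
  exact zero_ne_one hβd

/-- If `k = 0` then every `x ∈ ℳ_{0,m}` has `x m = 0`. -/
lemma memM_xm_zero (hβ0 : β ≠ 0) {x : Eseq} (hx : x ∈ Mspace β 0 m) : x m = 0 := by
  have h := memM_H hx
  have h0 := memM_zero hx
  simp only [Nat.zero_add, h0, sub_zero] at h
  exact (mul_eq_zero.mp h).resolve_left hβ0

/-- Key relation: for `x, v ∈ ℳ` and `j ≥ k`, `x_{j+m}^{d-1} v_{j+m} = x_j^{d-1} v_j`. -/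
lemma prodper (hd : 2 ≤ d) (hβd : β ^ d = 1) {x v : Eseq}
    (hx : x ∈ Mspace β k m) (hv : v ∈ Mspace β k m) {j : ℕ} (hj : k ≤ j) :
    (x (j + m)) ^ (d - 1) * v (j + m) = (x j) ^ (d - 1) * v j := by
  rcases eq_or_lt_of_le hj with rfl | hj'
  · have hxk : x k = β * x (k + m) := by linear_combination - memM_H hx
    have hvk : v k = β * v (k + m) := by linear_combination - memM_H hv
    obtain ⟨e, rfl⟩ : ∃ e, d = e + 1 := ⟨d - 1, by omega⟩
    simp only [Nat.add_sub_cancel]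
    rw [hxk, hvk]
    have hβd' : β ^ (e + 1) = 1 := hβd
    linear_combination (-((x (k + m)) ^ e * v (k + m))) * hβd'
  · rw [memM_per hx j hj', memM_per hv j hj']

lemma powper (hd : 2 ≤ d) (hβd : β ^ d = 1) {x : Eseq}
    (hx : x ∈ Mspace β k m) {j : ℕ} (hj : k ≤ j) :
    (x (j + m)) ^ d = (x j) ^ d := by
  have h := prodper hd hβd hx hx hj
  obtain ⟨e, rfl⟩ : ∃ e, d = e + 1 := ⟨d - 1, by omega⟩
  simp only [Nat.add_sub_cancel] at h
  rw [pow_succ, pow_succ, h]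

/-- The linearization of `Q` at `x`, applied to `v`. -/
def useq (d : ℕ) (x v : Eseq) : Eseq :=
  fun i => if 2 ≤ i then (d : ℂ) * (x (i - 1)) ^ (d - 1) * v (i - 1) else 0

/-- Periodicity of `Qmap d x` for `x ∈ ℳ`. -/
lemma Qper (hd : 2 ≤ d) (hβd : β ^ d = 1) (hm : 1 ≤ m) {x : Eseq}
    (hx : x ∈ Mspace β k m) : ∀ i, k + 1 ≤ i → Qmap d x (i + m) = Qmap d x i := by
  intro i hi
  by_cases h2 : 2 ≤ i
  · have hi1 : i + m - 1 = (i - 1) + m := by omega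
    simp only [Qmap, if_pos h2, if_pos (show 2 ≤ i + m by omega), hi1]
    exact powper hd hβd hx (by omega)
  · have hi1 : i = 1 := by omega
    have hk : k = 0 := by omega
    subst hi1; subst hk
    have hxm : x m = 0 := memM_xm_zero (beta_ne_zero hd hβd) hx
    simp only [Qmap, if_pos (show 2 ≤ 1 + m by omega), if_neg h2,
      show 1 + m - 1 = m by omega, hxm]
    exact zero_pow (by omega)

/-- Periodicity of `useq d x v` for `x, v ∈ ℳ`. -/
lemma uper (hd : 2 ≤ d) (hβd : β ^ d = 1) (hm : 1 ≤ m) {x v : Eseq}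
    (hx : x ∈ Mspace β k m) (hv : v ∈ Mspace β k m) :
    ∀ i, k + 1 ≤ i → useq d x v (i + m) = useq d x v i := by
  intro i hi
  by_cases h2 : 2 ≤ i
  · have hi1 : i + m - 1 = (i - 1) + m := by omega
    simp only [useq, if_pos h2, if_pos (show 2 ≤ i + m by omega), hi1]
    rw [mul_assoc, mul_assoc, prodper hd hβd hx hv (by omega)]
  · have hi1 : i = 1 := by omega
    have hk : k = 0 := by omega
    subst hi1; subst hk
    have hxm : x m = 0 := memM_xm_zero (beta_ne_zero hd hβd) hx
    simp only [useq, if_pos (show 2 ≤ 1 + m by omega), if_neg h2,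
      show 1 + m - 1 = m by omega, hxm]
    rw [zero_pow (by omega)]
    ring

/-- If `y` is eventually periodic in the right sense, `π_{k,m} y ∈ ℳ_{k,m}`. -/
lemma projH_mem (hβ1 : β ≠ 1) (hm : 1 ≤ m) {y : Eseq}
    (hy : ∀ i, k + 1 ≤ i → y (i + m) = y i) :
    projH β k m y ∈ Mspace β k m := by
  have hβ1' : β - 1 ≠ 0 := sub_ne_zero.mpr hβ1
  refine memM_of (by simp [projH]) ?_ ?_
  · intro i hi
    simp only [projH, if_neg (show ¬ (i + m = 0) by omega), if_neg (show ¬ (i = 0) by omega),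
      hy i hi]
  · by_cases hk : k = 0
    · subst hk
      have h1 : projH β 0 m y 0 = 0 := by simp [projH]
      have h2 : projH β 0 m y (0 + m) = 0 := by
        simp only [Nat.zero_add, projH, if_neg (show ¬ (m = 0) by omega), kappa, reduceIte]
        ring
      rw [h1, h2]
      ring
    · simp only [projH, if_neg (show ¬ (k + m = 0) by omega), if_neg hk, kappa]
      field_simp
      ring

lemma Fmem (hd : 2 ≤ d) (hβd : β ^ d = 1) (hβ1 : β ≠ 1) (hm : 1 ≤ m) {x : Eseq}
    (hx : x ∈ Mspace β k m) : Fmap β d k m x ∈ Mspace β k m :=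
  projH_mem hβ1 hm (Qper hd hβd hm hx)

lemma Fapp {x : Eseq} {i : ℕ} (hi : i ≠ 0) :
    Fmap β d k m x i = Qmap d x i - kappa β k m (Qmap d x) := by
  simp [Fmap, projH, hi]

/-- A member of `ℳ` vanishing on `[0, k+m]` vanishes everywhere. -/
lemma memM_ext_zero (hm : 1 ≤ m) {v : Eseq} (hv : v ∈ Mspace β k m)
    (h0 : ∀ j, j ≤ k + m → v j = 0) : v = 0 := by
  funext j
  induction j using Nat.strong_induction_on with
  | _ j ih =>
    show v j = 0
    by_cases hj : j ≤ k + m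
    · exact h0 j hj
    · have h := memM_per hv (j - m) (by omega)
      rw [show j - m + m = j by omega] at h
      rw [h]
      exact ih (j - m) (by omega)

lemma Mfin (hm : 1 ≤ m) : FiniteDimensional ℂ (Mspace β k m) := by
  let φ : Mspace β k m →ₗ[ℂ] (Fin (k + m + 1) → ℂ) :=
    { toFun := fun v i => (v : Eseq) i.1
      map_add' := fun a b => rfl
      map_smul' := fun c a => rfl }
  refine FiniteDimensional.of_injective φ ?_
  intro a b hab
  apply Subtype.ext
  have h : (a : Eseq) - (b : Eseq) = 0 := by
    refine memM_ext_zero hm (sub_mem a.2 b.2) (fun j hj => ?_)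
    have := congrFun hab ⟨j, by omega⟩
    simpa [φ, sub_eq_zero] using this
  exact sub_eq_zero.mp h

end Stmt9Aux
section Stmt9Aux2
variable {β : ℂ} {d k m : ℕ}

lemma kappa_lin (c₁ c₂ : ℂ) (y z : Eseq) :
    kappa β k m (fun i => c₁ * y i + c₂ * z i) = c₁ * kappa β k m y + c₂ * kappa β k m z := by
  unfold kappa
  split_ifs
  · ring
  · ring

lemma useq_lin (x : Eseq) (c₁ c₂ : ℂ) (v w : Eseq) (i : ℕ) :
    useq d x (c₁ • v + c₂ • w) i = c₁ * useq d x v i + c₂ * useq d x w i := by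
  unfold useq
  split_ifs
  · simp only [Pi.add_apply, Pi.smul_apply, smul_eq_mul]
    ring
  · ring

/-- The derivative of `F_{k,m}` at `x`, as a linear endomorphism of `ℳ_{k,m}`. -/
def Lmap (β : ℂ) (d k m : ℕ) (hd : 2 ≤ d) (hβd : β ^ d = 1) (hβ1 : β ≠ 1) (hm : 1 ≤ m)
    (x : Eseq) (hx : x ∈ Mspace β k m) : Mspace β k m →ₗ[ℂ] Mspace β k m where
  toFun v := ⟨projH β k m (useq d x v), projH_mem hβ1 hm (uper hd hβd hm hx v.2)⟩
  map_add' a b := by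
    apply Subtype.ext
    show projH β k m (useq d x ((a : Eseq) + b)) =
      projH β k m (useq d x a) + projH β k m (useq d x b)
    funext i
    have hu : ∀ i', useq d x ((a : Eseq) + b) i' =
        useq d x a i' + useq d x b i' := by
      intro i'
      have := useq_lin (d := d) x 1 1 (a : Eseq) (b : Eseq) i'
      simpa using this
    have hκ : kappa β k m (useq d x ((a : Eseq) + b)) =
        kappa β k m (useq d x a) + kappa β k m (useq d x b) := by
      have h1 : useq d x ((a : Eseq) + b) =
          fun i' => 1 * useq d x (a : Eseq) i' + 1 * useq d x (b : Eseq) i' := by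
        funext i'; rw [hu i']; ring
      rw [h1, kappa_lin]; ring
    simp only [projH, Pi.add_apply]
    split_ifs
    · ring
    · rw [hu i, hκ]; ring
  map_smul' c a := by
    apply Subtype.ext
    show projH β k m (useq d x (c • (a : Eseq))) = c • projH β k m (useq d x a)
    funext i
    have hu : ∀ i', useq d x (c • (a : Eseq)) i' = c * useq d x a i' := by
      intro i'
      have := useq_lin (d := d) x c 0 (a : Eseq) 0 i'
      simpa using this
    have hκ : kappa β k m (useq d x (c • (a : Eseq))) = c * kappa β k m (useq d x a) := by
      have h1 : useq d x (c • (a : Eseq)) =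
          fun i' => c * useq d x (a : Eseq) i' + 0 * useq d x (0 : Eseq) i' := by
        funext i'; rw [hu i']; ring
      rw [h1, kappa_lin]; ring
    simp only [projH, Pi.smul_apply, smul_eq_mul]
    split_ifs
    · ring
    · rw [hu i, hκ]; ring

lemma Lmap_isDeriv (hd : 2 ≤ d) (hβd : β ^ d = 1) (hβ1 : β ≠ 1) (hm : 1 ≤ m)
    (x : Eseq) (hx : x ∈ Mspace β k m) :
    IsDerivAt β d k m x (Lmap β d k m hd hβd hβ1 hm x hx) := by
  intro v i
  have hQ : ∀ j, HasDerivAt (fun t : ℂ => Qmap d (x + t • (v : Eseq)) j) (useq d x v j) 0 := by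
    intro j
    by_cases hj : 2 ≤ j
    · have h1 : HasDerivAt (fun t : ℂ => x (j - 1) + t * (v : Eseq) (j - 1))
          ((v : Eseq) (j - 1)) 0 := by
        simpa using ((hasDerivAt_id (0 : ℂ)).mul_const ((v : Eseq) (j - 1))).const_add (x (j - 1))
      have h2 := h1.fun_pow d
      simp only [Qmap, if_pos hj, Pi.add_apply, Pi.smul_apply, smul_eq_mul, useq]
      simpa using h2
    · simp only [Qmap, if_neg hj, useq]
      simpa [hj] using hasDerivAt_const (0 : ℂ) (0 : ℂ)
  have hκ : HasDerivAt (fun t : ℂ => kappa β k m (Qmap d (x + t • (v : Eseq))))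
      (kappa β k m (useq d x v)) 0 := by
    unfold kappa
    by_cases hk : k = 0
    · simp only [if_pos hk]
      exact hQ m
    · simp only [if_neg hk]
      exact (((hQ (k + m)).const_mul β).sub (hQ k)).div_const (β - 1)
  by_cases hi : i = 0
  · subst hi
    have h1 : ((Lmap β d k m hd hβd hβ1 hm x hx v : Eseq)) 0 = 0 := by
      simp [Lmap, projH]
    rw [h1]
    have h2 : (fun t : ℂ => Fmap β d k m (x + t • (v : Eseq)) 0) = fun _ => 0 := by
      funext t; simp [Fmap, projH]
    rw [h2, deriv_const]
  · have h2 : (fun t : ℂ => Fmap β d k m (x + t • (v : Eseq)) i) =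
        fun t : ℂ => Qmap d (x + t • (v : Eseq)) i -
          kappa β k m (Qmap d (x + t • (v : Eseq))) := by
      funext t; simp [Fmap, projH, hi]
    rw [h2, ((hQ i).fun_sub hκ).deriv]
    simp [Lmap, projH, hi]

lemma Lmap_bij (hd : 2 ≤ d) (hβd : β ^ d = 1) (hβ1 : β ≠ 1) (hm : 1 ≤ m)
    (x : Eseq) (hx : x ∈ Mspace β k m)
    (hnz : ∀ i, 1 ≤ i → i ≤ k + m - 1 → x i ≠ 0) :
    Function.Bijective (Lmap β d k m hd hβd hβ1 hm x hx) := by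
  haveI := Mfin (β := β) (k := k) (m := m) hm
  have hβ0 : β ≠ 0 := beta_ne_zero hd hβd
  have hinj : Function.Injective (Lmap β d k m hd hβd hβ1 hm x hx) := by
    rw [← LinearMap.ker_eq_bot]
    rw [LinearMap.ker_eq_bot']
    intro v hv0
    have hcoe : projH β k m (useq d x (v : Eseq)) = 0 := by
      have := congrArg (Subtype.val) hv0
      simpa [Lmap] using this
    have hκ0 : kappa β k m (useq d x (v : Eseq)) = 0 := by
      have h1 := congrFun hcoe 1
      simp only [projH, if_neg (show (1 : ℕ) ≠ 0 by omega), useq, Pi.zero_apply] at h1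
      simpa using h1
    have hvz : ∀ j, 1 ≤ j → j ≤ k + m - 1 → (v : Eseq) j = 0 := by
      intro j h1 h2
      have h3 := congrFun hcoe (j + 1)
      simp only [projH, if_neg (show ¬ (j + 1 = 0) by omega), hκ0, sub_zero, useq,
        if_pos (show 2 ≤ j + 1 by omega), Nat.add_sub_cancel, Pi.zero_apply] at h3
      have hd0 : (d : ℂ) ≠ 0 := Nat.cast_ne_zero.mpr (by omega)
      have hx0 : (x j) ^ (d - 1) ≠ 0 := pow_ne_zero _ (hnz j h1 h2)
      rcases mul_eq_zero.mp h3 with h | h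
      · rcases mul_eq_zero.mp h with h' | h'
        · exact absurd h' hd0
        · exact absurd h' hx0
      · exact h
    apply Subtype.ext
    show (v : Eseq) = 0
    refine memM_ext_zero hm v.2 ?_
    intro j hj
    rcases Nat.eq_zero_or_pos j with rfl | hj1
    · exact memM_zero v.2
    · by_cases hjm : j ≤ k + m - 1
      · exact hvz j hj1 hjm
      · have hjeq : j = k + m := by omega
        subst hjeq
        have hH := memM_H v.2
        have hvk : (v : Eseq) k = 0 := by
          rcases Nat.eq_zero_or_pos k with rfl | hk1
          · exact memM_zero v.2
          · exact hvz k hk1 (by omega)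
        rw [hvk, sub_zero] at hH
        exact (mul_eq_zero.mp hH).resolve_left hβ0
  exact ⟨hinj, LinearMap.injective_iff_surjective.mp hinj⟩

end Stmt9Aux2
/-- `F_{k,m}(C(F_{k,m})) ⊆ Δ_{k,m}`, `F_{k,m}(Δ_{k,m}) ⊆ Δ_{k,m}`, and
consequently `PC(F_{k,m}) ⊆ Δ_{k,m}`. -/
theorem stmt9 (d : ℕ) (hd : 2 ≤ d) (β : ℂ) (hβd : β ^ d = 1) (hβ1 : β ≠ 1)
    (k m : ℕ) (hm : 1 ≤ m) :
    Fmap β d k m '' CsetD β d k m ⊆ Delta β k m ∧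
    Fmap β d k m '' Delta β k m ⊆ Delta β k m ∧
    PCsetD β d k m ⊆ Delta β k m := by
  have hzero : ∀ x : Eseq, x ∈ Mspace β k m → (∃ i, 1 ≤ i ∧ i ≤ k + m - 1 ∧ x i = 0) →
      Fmap β d k m x ∈ Delta β k m := by
    rintro x hxM ⟨i, hi1, hi2, hi0⟩
    refine ⟨Fmem hd hβd hβ1 hm hxM, 1, i + 1, le_refl 1, by omega, by omega, ?_⟩
    rw [Fapp (by omega), Fapp (by omega)]
    have hQ1 : Qmap d x 1 = 0 := by simp [Qmap]
    have hQi : Qmap d x (i + 1) = 0 := by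
      simp [Qmap, show 2 ≤ i + 1 by omega, Nat.add_sub_cancel, hi0,
        zero_pow (show d ≠ 0 by omega)]
    rw [hQ1, hQi]
  have part1 : Fmap β d k m '' CsetD β d k m ⊆ Delta β k m := by
    rintro _ ⟨x, ⟨hxM, hcrit⟩, rfl⟩
    by_cases hz : ∃ i, 1 ≤ i ∧ i ≤ k + m - 1 ∧ x i = 0
    · exact hzero x hxM hz
    · push_neg at hz
      exfalso
      exact hcrit _ (Lmap_isDeriv hd hβd hβ1 hm x hxM)
        (Lmap_bij hd hβd hβ1 hm x hxM (fun i h1 h2 => hz i h1 h2))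
  have part2 : Fmap β d k m '' Delta β k m ⊆ Delta β k m := by
    rintro _ ⟨x, ⟨hxM, i, j, hi1, hij, hjkm, hxij⟩, rfl⟩
    have hFM := Fmem hd hβd hβ1 hm hxM
    have hF : ∀ a, 1 ≤ a → Fmap β d k m x (a + 1) = x a ^ d - kappa β k m (Qmap d x) := by
      intro a ha
      rw [Fapp (by omega)]
      simp [Qmap, show 2 ≤ a + 1 by omega, Nat.add_sub_cancel]
    by_cases hjlt : j < k + m
    · refine ⟨hFM, i + 1, j + 1, by omega, by omega, by omega, ?_⟩
      rw [hF i hi1, hF j (by omega), hxij]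
    · have hjeq : j = k + m := by omega
      subst hjeq
      by_cases hik : i = k
      · have hH := memM_H hxM
        have hik' : x k = x (k + m) := hik ▸ hxij
        have h0 : (β - 1) * x (k + m) = 0 := by linear_combination hH + hik'
        have hxk : x k = 0 := by
          rw [hik']
          exact (mul_eq_zero.mp h0).resolve_left (sub_ne_zero.mpr hβ1)
        exact hzero x hxM ⟨k, by omega, by omega, hxk⟩
      · have hchain : Fmap β d k m x (i + 1) = Fmap β d k m x (k + 1) := by
          have h1 : Fmap β d k m x (i + 1) = Fmap β d k m x (k + m + 1) := by
            rw [hF i hi1, hF (k + m) (by omega), hxij]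
          have h2 := memM_per hFM (k + 1) (le_refl _)
          rw [show k + 1 + m = k + m + 1 by omega] at h2
          rw [h1, h2]
        rcases lt_or_gt_of_ne hik with h | h
        · exact ⟨hFM, i + 1, k + 1, by omega, by omega, by omega, hchain⟩
        · exact ⟨hFM, k + 1, i + 1, by omega, by omega, by omega, hchain.symm⟩
  refine ⟨part1, part2, ?_⟩
  simp only [PCsetD, Set.iUnion_subset_iff]
  intro j hj
  induction j with
  | zero => omega
  | succ n ih =>
    rcases Nat.eq_zero_or_pos n with rfl | hn
    · simpa using part1
    · rw [Function.iterate_succ', Set.image_comp]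
      exact (Set.image_mono (ih hn)).trans part2
end
end

section
/- Let (k,m) ∈ ℕ × ℕ* and let z ∈ ℳ_{k,m} be a fixed point of F_{k,m}. Set P(t) = t^d + z_1. Then z_i = P^{∘i}(0) for all i ≥ 1 (so z is the critical orbit of P, and P is post-critically finite); moreover, if the sequence z is preperiodic of exact type (k',m'), then (k',m') ⪯ (k,m). -/
noncomputable section

lemma per_mul_s10 (z : Eseq) (a b : ℕ) (h : ∀ i, a + 1 ≤ i → z (i + b) = z i) :
    ∀ j i, a + 1 ≤ i → z (i + j * b) = z i := by
  intro j
  induction j with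
  | zero => intro i _; simp
  | succ n ih =>
    intro i hi
    have h1 := h (i + n * b) (by omega)
    have h2 := ih i hi
    have h3 : i + (n + 1) * b = i + n * b + b := by ring
    rw [h3, h1, h2]

lemma dvd_of_min (z : Eseq) (k' m' : ℕ) (hm' : 1 ≤ m')
    (hper' : ∀ i, k' + 1 ≤ i → z (i + m') = z i)
    (hmin : ∀ a b : ℕ, 1 ≤ b → (∀ i, a + 1 ≤ i → z (i + b) = z i) → k' ≤ a ∧ m' ≤ b)
    (a b : ℕ) (hb : 1 ≤ b) (hperb : ∀ i, a + 1 ≤ i → z (i + b) = z i) :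
    m' ∣ b := by
  rcases Nat.eq_zero_or_pos (b % m') with hr | hr
  · exact Nat.dvd_of_mod_eq_zero hr
  · exfalso
    have hlt : b % m' < m' := Nat.mod_lt _ hm'
    have hper : ∀ i, max a k' + 1 ≤ i → z (i + b % m') = z i := by
      intro i hi
      have h1 : z (i + b % m' + b / m' * m') = z (i + b % m') :=
        per_mul_s10 z k' m' hper' (b / m') (i + b % m') (by omega)
      have h2 : i + b % m' + b / m' * m' = i + b := by
        rw [Nat.add_assoc, Nat.mod_add_div']
      rw [h2] at h1
      rw [← h1, hperb i (by omega)]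
    have := (hmin _ _ hr hper).2
    omega

/-- if `z ∈ ℳ_{k,m}` is a fixed point of `F_{k,m}` and `P(t) = t^d + z_1`,
then `z_i = P^{∘i}(0)` for all `i ≥ 1` (so `z` is the critical orbit of `P` and `P` is
post-critically finite); moreover, if `z` is preperiodic of exact type `(k',m')`,
then `(k',m') ⪯ (k,m)`. -/
theorem stmt10 (d : ℕ) (hd : 2 ≤ d) (β : ℂ) (hβd : β ^ d = 1) (hβ1 : β ≠ 1)
    (k m : ℕ) (hm : 1 ≤ m) (z : Eseq) (hz : z ∈ Mspace β k m)
    (hfix : Fmap β d k m z = z) :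
    (∀ i, 1 ≤ i → z i = (fun t : ℂ => t ^ d + z 1)^[i] 0) ∧
    (∀ k' m' : ℕ, 1 ≤ m' →
      (∀ i, k' + 1 ≤ i → z (i + m') = z i) →
      (∀ a b : ℕ, 1 ≤ b → (∀ i, a + 1 ≤ i → z (i + b) = z i) → k' ≤ a ∧ m' ≤ b) →
      (m' ∣ m ∧ (k' = k ∨ (k' = 0 ∧ m' ∣ k)))) := by
  obtain ⟨⟨hz0, hperm⟩, -, hH⟩ := hz
  have hF : ∀ i, Fmap β d k m z i = z i := fun i => congrFun hfix i
  have hrec' : ∀ i : ℕ, z (i + 1) = z i ^ d + z 1 := by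
    intro i
    rcases Nat.eq_zero_or_pos i with h | h
    · subst h; simp [hz0, zero_pow (by omega : d ≠ 0)]
    · have h1 := hF (i + 1)
      have h2 := hF 1
      simp only [Fmap, projH, Qmap] at h1 h2
      rw [if_neg (by omega : ¬ i + 1 = 0), if_pos (by omega : 2 ≤ i + 1)] at h1
      rw [if_neg (one_ne_zero), if_neg (by omega : ¬ 2 ≤ 1)] at h2
      simp only [Nat.add_sub_cancel] at h1
      linear_combination h2 - h1
  have key : ∀ i, z i = (fun t : ℂ => t ^ d + z 1)^[i] 0 := by
    intro i
    induction i with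
    | zero => simpa using hz0
    | succ n ih => rw [Function.iterate_succ_apply', ← ih, hrec' n]
  refine ⟨fun i _ => key i, ?_⟩
  intro k' m' hm' hper' hmin
  have hmdvd : m' ∣ m := dvd_of_min z k' m' hm' hper' hmin k m hm hperm
  refine ⟨hmdvd, ?_⟩
  obtain ⟨hk'le, -⟩ := hmin k m hm hperm
  rcases eq_or_lt_of_le hk'le with he | hlt
  · exact Or.inl he
  · right
    have hk1 : 1 ≤ k := by omega
    have hzk0 : z k = 0 := by
      have hzkm : z (k + m) = z k := by
        obtain ⟨q, hq⟩ := hmdvd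
        have := per_mul_s10 z k' m' hper' q k (by omega)
        rw [mul_comm] at this
        rw [hq, this]
      rw [hzkm] at hH
      have h0 : (β - 1) * z k = 0 := by linear_combination hH
      rcases mul_eq_zero.1 h0 with h | h
      · exact absurd (by linear_combination h : β = (1 : ℂ)) hβ1
      · exact h
    have hperk : ∀ i, z (i + k) = z i := by
      intro i
      induction i with
      | zero => rw [Nat.zero_add, hzk0, hz0]
      | succ n ih =>
        have h1 : n + 1 + k = n + k + 1 := by ring
        rw [h1, hrec' (n + k), ih, hrec' n]
    obtain ⟨hk'0, -⟩ := hmin 0 k hk1 (fun i _ => hperk i)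
    have hk'eq : k' = 0 := by omega
    subst hk'eq
    exact ⟨rfl, dvd_of_min z 0 m' hm' hper' hmin 0 k hk1 (fun i _ => hperk i)⟩
end
end

section
/- Let (k,m) ∈ ℕ × ℕ*, let z ∈ ℳ_{k,m} be a fixed point of F_{k,m}, and let (k',m') be the exact type of the sequence z. Then z ∈ Δ_{k,m} if and only if (k',m') ≺ (k,m). -/
noncomputable section

/-- a fixed point `z` of `F_{k,m}` of exact type `(k',m')` lies in `Δ_{k,m}`
iff `(k',m') ≺ (k,m)`. -/
theorem stmt11 (d : ℕ) (hd : 2 ≤ d) (β : ℂ) (hβd : β ^ d = 1) (hβ1 : β ≠ 1)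
    (k m : ℕ) (hm : 1 ≤ m) (z : Eseq) (hz : z ∈ Mspace β k m)
    (hfix : Fmap β d k m z = z)
    (k' m' : ℕ) (hm' : 1 ≤ m')
    (hper : ∀ i, k' + 1 ≤ i → z (i + m') = z i)
    (hexact : ∀ a b : ℕ, 1 ≤ b → (∀ i, a + 1 ≤ i → z (i + b) = z i) → k' ≤ a ∧ m' ≤ b) :
    z ∈ Delta β k m ↔
      ((m' ∣ m ∧ (k' = k ∨ (k' = 0 ∧ m' ∣ k))) ∧ (k', m') ≠ (k, m)) := by
  have hz0 : z 0 = 0 := hz.1.1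
  have hP : ∀ i, k + 1 ≤ i → z (i + m) = z i := hz.1.2
  have hH : β * z (k + m) - z k = 0 := hz.2.2
  set c := kappa β k m (Qmap d z) with hc
  -- the recurrence z_{i+1} = z_i ^ d - c
  have hrec : ∀ i, z (i + 1) = z i ^ d - c := by
    intro i
    have h := congrFun hfix (i + 1)
    unfold Fmap projH at h
    rw [← h]
    simp only [if_neg (Nat.succ_ne_zero i)]
    rw [← hc]
    congr 1
    unfold Qmap
    rcases Nat.eq_zero_or_pos i with h0 | h1
    · subst h0
      simp [hz0, zero_pow (by omega : d ≠ 0)]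
    · simp [show 2 ≤ i + 1 by omega]
  -- coincidences propagate
  have hA : ∀ i j, z i = z j → ∀ n, z (i + n) = z (j + n) := by
    intro i j h n
    induction n with
    | zero => simpa
    | succ n ih =>
      rw [show i + (n + 1) = (i + n) + 1 from rfl, show j + (n + 1) = (j + n) + 1 from rfl,
        hrec, hrec, ih]
  -- iterating a period
  have hiter : ∀ q i, k' + 1 ≤ i → z (i + q * m') = z i := by
    intro q
    induction q with
    | zero => simp
    | succ q ih =>
      intro i hi
      have e : i + (q + 1) * m' = (i + q * m') + m' := by ring
      rw [e, hper _ (by omega), ih i hi]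
  -- any period of the tail is divisible by m'
  have hdvdlem : ∀ (K p : ℕ), k' ≤ K → 1 ≤ p → (∀ i, K + 1 ≤ i → z (i + p) = z i) →
      m' ∣ p := by
    intro K p hK hp1 hp
    by_contra hnd
    have hr1 : 1 ≤ p % m' := by
      rcases Nat.eq_zero_or_pos (p % m') with h | h
      · exact absurd (Nat.dvd_of_mod_eq_zero h) hnd
      · omega
    have hrm : p % m' < m' := Nat.mod_lt _ (by omega)
    have hpr : ∀ i, K + 1 ≤ i → z (i + p % m') = z i := by
      intro i hi
      have h1 : z ((i + p % m') + (p / m') * m') = z (i + p % m') :=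
        hiter (p / m') (i + p % m') (by omega)
      have h2 : (i + p % m') + (p / m') * m' = i + p := by
        have := Nat.mod_add_div' p m'
        omega
      rw [h2] at h1
      rw [← h1, hp i hi]
    have := (hexact K (p % m') hr1 hpr).2
    omega
  have hkm' := hexact k m hm hP
  have hm'm : m' ∣ m := hdvdlem k m hkm'.1 hm hP
  -- distinctness of the first k'+m' terms
  have hdist : ∀ i j, 1 ≤ i → i < j → j ≤ k' + m' → z i ≠ z j := by
    intro i j hi hij hj heq
    have hperij : ∀ l, (i - 1) + 1 ≤ l → z (l + (j - i)) = z l := by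
      intro l hl
      have h := hA i j heq (l - i)
      have e1 : i + (l - i) = l := by omega
      have e2 : j + (l - i) = l + (j - i) := by omega
      rw [e1, e2] at h
      exact h.symm
    have := hexact (i - 1) (j - i) (by omega) hperij
    omega
  -- the bracket condition always holds
  have hbr : k' = k ∨ (k' = 0 ∧ m' ∣ k) := by
    rcases eq_or_lt_of_le hkm'.1 with h | h
    · exact Or.inl h
    · right
      have hzkm : z (k + m) = z k := by
        obtain ⟨q, hq⟩ := hm'm
        have := hiter q k (by omega)
        rw [hq, Nat.mul_comm]
        exact this
      have hzk : z k = 0 := by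
        rw [hzkm] at hH
        have h2 : (β - 1) * z k = 0 := by ring_nf; linear_combination hH
        rcases mul_eq_zero.mp h2 with h3 | h3
        · exact absurd (by linear_combination h3) hβ1
        · exact h3
      have hkper : ∀ i, 0 + 1 ≤ i → z (i + k) = z i := by
        intro i _
        have h4 := hA 0 k (by rw [hz0, hzk]) i
        rw [Nat.zero_add] at h4
        rw [Nat.add_comm]
        exact h4.symm
      have hk1 : 1 ≤ k := by omega
      have h0 := hexact 0 k hk1 hkper
      exact ⟨by omega, hdvdlem 0 k (by omega) hk1 hkper⟩
  constructor
  · rintro ⟨_, i, j, hi, hij, hjkm, heq⟩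
    refine ⟨⟨hm'm, hbr⟩, ?_⟩
    intro hne
    have hk : k' = k ∧ m' = m := by
      have := Prod.mk.injEq k' m' k m ▸ hne
      exact ⟨congrArg Prod.fst hne, congrArg Prod.snd hne⟩
    exact hdist i j hi hij (by omega) heq
  · rintro ⟨⟨_, _⟩, hne⟩
    have hlt : k' + m' < k + m := by
      have : ¬(k' = k ∧ m' = m) := by
        rintro ⟨h1, h2⟩
        exact hne (by rw [h1, h2])
      omega
    refine ⟨hz, k' + 1, k' + 1 + m', by omega, by omega, by omega, ?_⟩
    have := hper (k' + 1) le_rfl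
    rw [show k' + 1 + m' = (k' + 1) + m' from rfl]
    exact this.symm
end
end

section
/- Let (k,m) ∈ ℕ × ℕ* and let z ∈ ℳ_{k,m} be a fixed point of F_{k,m} whose sequence is preperiodic of exact type (k,m). Set δ_i = d·z_i^{d−1}. Then δ_i ≠ 0 for all 1 ≤ i ≤ k+m−1, the transpose L^* of L = D_z F_{k,m} is invertible, and its inverse is the linear map L_* : ℳ_{k,m}^* → ℳ_{k,m}^* defined by L_*(ω_i) = (ω_{i+1} − ω_1)/δ_i for 1 ≤ i ≤ k+m−1. -/
noncomputable section

/-! ### Auxiliary material for stmt14 -/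

lemma aux_fmap_apply (β : ℂ) (d k m : ℕ) (x : Eseq) (j : ℕ) (hj : 1 ≤ j) :
    Fmap β d k m x j = Qmap d x j - kappa β k m (Qmap d x) := by
  unfold Fmap projH
  rw [if_neg (by omega : ¬ j = 0)]

lemma aux_qmap_one (d : ℕ) (x : Eseq) : Qmap d x 1 = 0 := by
  unfold Qmap; norm_num

lemma aux_qmap_succ (d : ℕ) (x : Eseq) (j : ℕ) (hj : 1 ≤ j) :
    Qmap d x (j + 1) = x j ^ d := by
  unfold Qmap
  rw [if_pos (by omega : 2 ≤ j + 1)]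
  simp

/-- The coordinate evaluation map `ℳ_{k,m} → ℂ^{k+m-1}`. -/
def emap (β : ℂ) (k m : ℕ) : Mspace β k m →ₗ[ℂ] (Fin (k + m - 1) → ℂ) where
  toFun v j := (v : Eseq) (j.1 + 1)
  map_add' _ _ := rfl
  map_smul' _ _ := rfl

lemma emap_apply (β : ℂ) (k m : ℕ) (v : Mspace β k m) (j : Fin (k + m - 1)) :
    emap β k m v j = (v : Eseq) (j.1 + 1) := rfl

lemma omegaForm_apply (β : ℂ) (k m i : ℕ) (v : Mspace β k m) :
    omegaForm β k m i v = (v : Eseq) i := rfl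

/-- at a fixed point of exact type `(k,m)`, all `δ_i = d z_i^{d-1}` with
`1 ≤ i ≤ k+m−1` are nonzero, the transpose `L^*` of `L = D_z F_{k,m}` is invertible, and
its inverse is the map `L_*` with `L_*(ω_i) = (ω_{i+1} − ω_1)/δ_i`. -/
theorem stmt14 (d : ℕ) (hd : 2 ≤ d) (β : ℂ) (hβd : β ^ d = 1) (hβ1 : β ≠ 1)
    (k m : ℕ) (hm : 1 ≤ m) (z : Eseq) (hz : z ∈ Mspace β k m)
    (hfix : Fmap β d k m z = z)
    (hexact : ∀ a b : ℕ, 1 ≤ b → (∀ i, a + 1 ≤ i → z (i + b) = z i) → k ≤ a ∧ m ≤ b)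
    (L : Mspace β k m →ₗ[ℂ] Mspace β k m) (hL : IsDerivAt β d k m z L) :
    (∀ i, 1 ≤ i → i ≤ k + m - 1 → (d : ℂ) * z i ^ (d - 1) ≠ 0) ∧
    Function.Bijective L.dualMap ∧
    (∀ Lstar : Module.Dual ℂ (Mspace β k m) →ₗ[ℂ] Module.Dual ℂ (Mspace β k m),
      (∀ i, 1 ≤ i → i ≤ k + m - 1 →
        Lstar (omegaForm β k m i) =
          ((d : ℂ) * z i ^ (d - 1))⁻¹ • (omegaForm β k m (i + 1) - omegaForm β k m 1)) →
      (Lstar.comp L.dualMap = LinearMap.id ∧ L.dualMap.comp Lstar = LinearMap.id)) := by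
  classical
  have hd0 : (d : ℂ) ≠ 0 := by
    simp only [ne_eq, Nat.cast_eq_zero]; omega
  have hβ0 : β ≠ 0 := by
    intro h
    rw [h, zero_pow (by omega : d ≠ 0)] at hβd
    exact zero_ne_one hβd
  -- fixed point recursion
  set K := kappa β k m (Qmap d z) with hK
  have hz1 : z 1 = -K := by
    conv_lhs => rw [← hfix]
    rw [aux_fmap_apply _ _ _ _ _ 1 le_rfl, aux_qmap_one, zero_sub, ← hK]
  have hrec : ∀ j, 1 ≤ j → z (j + 1) = z j ^ d - K := by
    intro j hj
    conv_lhs => rw [← hfix]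
    rw [aux_fmap_apply _ _ _ _ _ (j + 1) (by omega), aux_qmap_succ _ _ j hj, ← hK]
  -- Part 1: nonvanishing of the coordinates
  have hnz : ∀ i, 1 ≤ i → i ≤ k + m - 1 → z i ≠ 0 := by
    intro i h1 h2 h0
    have hper : ∀ nn, 1 ≤ nn → z (nn + i) = z nn := by
      intro nn hnn
      induction nn, hnn using Nat.le_induction with
      | base =>
        have h := hrec i h1
        rw [h0, zero_pow (by omega : d ≠ 0), zero_sub] at h
        rw [Nat.add_comm, h, hz1]
      | succ nn hnn ih =>
        have h1' : z ((nn + i) + 1) = z (nn + i) ^ d - K := hrec (nn + i) (by omega)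
        have h2' : z (nn + 1) = z nn ^ d - K := hrec nn (by omega)
        have he : nn + 1 + i = (nn + i) + 1 := by omega
        rw [he, h1', ih, ← h2']
    obtain ⟨hk0, hmi⟩ := hexact 0 i h1 (fun j hj => hper j (by omega))
    omega
  have hne : ∀ i, 1 ≤ i → i ≤ k + m - 1 → (d : ℂ) * z i ^ (d - 1) ≠ 0 :=
    fun i h1 h2 => mul_ne_zero hd0 (pow_ne_zero _ (hnz i h1 h2))
  -- derivative of the Qmap coordinates
  have hgder : ∀ (v : Eseq) (j : ℕ),
      HasDerivAt (fun t : ℂ => Qmap d (z + t • v) j)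
        (if 2 ≤ j then (d : ℂ) * z (j - 1) ^ (d - 1) * v (j - 1) else 0) 0 := by
    intro v j
    by_cases h2 : 2 ≤ j
    · rw [if_pos h2]
      have h1 : HasDerivAt (fun t : ℂ => z (j - 1) + t * v (j - 1)) (v (j - 1)) 0 :=
        (hasDerivAt_mul_const (v (j - 1))).const_add (z (j - 1))
      have h3 := h1.pow (n := d)
      simp only [zero_mul, add_zero] at h3
      have heq : (fun t : ℂ => Qmap d (z + t • v) j)
          = fun t => (z (j - 1) + t * v (j - 1)) ^ d := by
        funext t
        simp [Qmap, if_pos h2]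
      rw [heq]
      exact h3
    · rw [if_neg h2]
      have heq : (fun t : ℂ => Qmap d (z + t • v) j) = fun _ => 0 := by
        funext t
        simp [Qmap, h2]
      rw [heq]
      exact hasDerivAt_const 0 0
  -- derivative of the kappa part (value irrelevant)
  have hkder : ∀ v : Eseq, ∃ c : ℂ,
      HasDerivAt (fun t : ℂ => kappa β k m (Qmap d (z + t • v))) c 0 := by
    intro v
    by_cases hk : k = 0
    · refine ⟨if 2 ≤ m then (d : ℂ) * z (m - 1) ^ (d - 1) * v (m - 1) else 0, ?_⟩
      have heq : (fun t : ℂ => kappa β k m (Qmap d (z + t • v)))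
          = fun t => Qmap d (z + t • v) m := by
        funext t; unfold kappa; rw [if_pos hk]
      rw [heq]
      exact hgder v m
    · refine ⟨(β * (if 2 ≤ k + m then (d : ℂ) * z (k + m - 1) ^ (d - 1) * v (k + m - 1) else 0)
          - (if 2 ≤ k then (d : ℂ) * z (k - 1) ^ (d - 1) * v (k - 1) else 0)) / (β - 1), ?_⟩
      have heq : (fun t : ℂ => kappa β k m (Qmap d (z + t • v)))
          = fun t => (β * Qmap d (z + t • v) (k + m) - Qmap d (z + t • v) k) / (β - 1) := by
        funext t; unfold kappa; rw [if_neg hk]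
      rw [heq]
      exact (((hgder v (k + m)).const_mul β).sub (hgder v k)).div_const (β - 1)
  -- the key coordinate relation for L
  have hLcoord : ∀ (v : Mspace β k m) (i : ℕ), 1 ≤ i →
      ((L v : Eseq) (i + 1)) - ((L v : Eseq) 1)
        = (d : ℂ) * z i ^ (d - 1) * (v : Eseq) i := by
    intro v i hi
    obtain ⟨c, hc⟩ := hkder (v : Eseq)
    have hFj : ∀ j, 1 ≤ j → (L v : Eseq) j
        = (if 2 ≤ j then (d : ℂ) * z (j - 1) ^ (d - 1) * (v : Eseq) (j - 1) else 0) - c := by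
      intro j hj
      rw [hL v j]
      have heq : (fun t : ℂ => Fmap β d k m (z + t • (v : Eseq)) j)
          = fun t => Qmap d (z + t • (v : Eseq)) j
              - kappa β k m (Qmap d (z + t • (v : Eseq))) := by
        funext t; exact aux_fmap_apply _ _ _ _ _ j hj
      rw [heq]
      exact ((hgder (v : Eseq) j).sub hc).deriv
    rw [hFj (i + 1) (by omega), hFj 1 le_rfl,
      if_pos (by omega : 2 ≤ i + 1), if_neg (by omega : ¬ 2 ≤ 1)]
    simp only [Nat.add_sub_cancel]
    ring
  -- dual relation
  have hdual : ∀ i, 1 ≤ i →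
      L.dualMap (omegaForm β k m (i + 1)) - L.dualMap (omegaForm β k m 1)
        = ((d : ℂ) * z i ^ (d - 1)) • omegaForm β k m i := by
    intro i hi
    ext v
    simp only [LinearMap.sub_apply, LinearMap.dualMap_apply, LinearMap.smul_apply,
      smul_eq_mul, omegaForm_apply]
    exact hLcoord v i hi
  -- vanishing of first k+m-1 coordinates forces zero
  have hvanish : ∀ v : Mspace β k m,
      (∀ j, 1 ≤ j → j ≤ k + m - 1 → (v : Eseq) j = 0) → v = 0 := by
    intro v hv
    have hP : (v : Eseq) ∈ Pspace k m := (Submodule.mem_inf.mp v.2).1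
    have hH : (v : Eseq) ∈ Hspace β k m := (Submodule.mem_inf.mp v.2).2
    obtain ⟨hv0, hvP⟩ := hP
    obtain ⟨-, hvH⟩ := hH
    have key : ∀ j, (v : Eseq) j = 0 := by
      intro j
      induction j using Nat.strong_induction_on with
      | _ j ih =>
        by_cases h0 : j = 0
        · rw [h0]; exact hv0
        by_cases hsm : j ≤ k + m - 1
        · exact hv j (by omega) hsm
        by_cases hkm : j = k + m
        · have hvk : (v : Eseq) k = 0 := by
            rcases Nat.eq_zero_or_pos k with hk | hk
            · exact (congrArg (v : Eseq) hk).trans hv0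
            · exact hv k hk (by omega)
          have h' : β * (v : Eseq) (k + m) = 0 := by
            have := hvH
            rw [hvk, sub_zero] at this
            exact this
          rcases mul_eq_zero.mp h' with h'' | h''
          · exact absurd h'' hβ0
          · rw [hkm]; exact h''
        · have hj : k + m + 1 ≤ j := by omega
          have h1 : (v : Eseq) ((j - m) + m) = (v : Eseq) (j - m) := hvP (j - m) (by omega)
          rw [Nat.sub_add_cancel (by omega : m ≤ j)] at h1
          rw [h1]
          exact ih (j - m) (by omega)
    exact Subtype.ext (funext key)
  -- injectivity of the coordinate map
  have he : Function.Injective (emap β k m) := by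
    rw [← LinearMap.ker_eq_bot, LinearMap.ker_eq_bot']
    intro v hv
    apply hvanish
    intro j h1 h2
    have h := congrFun hv ⟨j - 1, by omega⟩
    rw [emap_apply, Nat.sub_add_cancel h1] at h
    exact h
  haveI hFD : FiniteDimensional ℂ (Mspace β k m) :=
    FiniteDimensional.of_injective (emap β k m) he
  -- spanning of the dual by the coordinate forms
  have hspan : Submodule.span ℂ
      (Set.range fun j : Fin (k + m - 1) => omegaForm β k m (j.1 + 1)) = ⊤ := by
    rw [Submodule.eq_top_iff']
    intro ω
    obtain ⟨φ, hφ⟩ := LinearMap.dualMap_surjective_of_injective he ω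
    have hω : ω = ∑ j : Fin (k + m - 1), φ (Pi.single j 1) • omegaForm β k m (j.1 + 1) := by
      ext v
      rw [← hφ]
      have h1 : emap β k m v = ∑ j, Pi.single j (emap β k m v j) :=
        (Finset.univ_sum_single _).symm
      calc (emap β k m).dualMap φ v = φ (emap β k m v) := rfl
        _ = ∑ j, φ (Pi.single j (emap β k m v j)) := by
            conv_lhs => rw [h1]
            rw [map_sum]
        _ = ∑ j, (emap β k m v j) * φ (Pi.single j 1) := by
            refine Finset.sum_congr rfl fun j _ => ?_
            have hs : (Pi.single j (emap β k m v j) : Fin (k + m - 1) → ℂ)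
                = (emap β k m v j) • (Pi.single j 1 : Fin (k + m - 1) → ℂ) := by
              funext x
              by_cases hx : x = j <;> simp [Pi.single_apply, hx]
            rw [hs, map_smul, smul_eq_mul]
        _ = (∑ j, φ (Pi.single j 1) • omegaForm β k m (j.1 + 1)) v := by
            rw [LinearMap.sum_apply]
            refine Finset.sum_congr rfl fun j _ => ?_
            rw [LinearMap.smul_apply, smul_eq_mul, omegaForm_apply, emap_apply]
            exact mul_comm _ _
    rw [hω]
    exact Submodule.sum_mem _ fun j _ =>
      Submodule.smul_mem _ _ (Submodule.subset_span ⟨j, rfl⟩)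
  -- surjectivity and injectivity of the transpose
  have hsurj : Function.Surjective L.dualMap := by
    rw [← LinearMap.range_eq_top, ← top_le_iff, ← hspan, Submodule.span_le]
    rintro _ ⟨j, rfl⟩
    have hj1 : 1 ≤ j.1 + 1 := by omega
    have hj2 : j.1 + 1 ≤ k + m - 1 := by omega
    refine ⟨((d : ℂ) * z (j.1 + 1) ^ (d - 1))⁻¹
      • (omegaForm β k m (j.1 + 1 + 1) - omegaForm β k m 1), ?_⟩
    rw [map_smul, map_sub, hdual (j.1 + 1) hj1, smul_smul,
      inv_mul_cancel₀ (hne _ hj1 hj2), one_smul]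
  have hinj : Function.Injective L.dualMap :=
    LinearMap.injective_iff_surjective.mpr hsurj
  refine ⟨hne, ⟨hinj, hsurj⟩, ?_⟩
  intro Lstar hLs
  have hright : L.dualMap.comp Lstar = LinearMap.id := by
    apply LinearMap.ext_on hspan
    rintro _ ⟨j, rfl⟩
    have hj1 : 1 ≤ j.1 + 1 := by omega
    have hj2 : j.1 + 1 ≤ k + m - 1 := by omega
    rw [LinearMap.comp_apply, hLs _ hj1 hj2, map_smul, map_sub, hdual (j.1 + 1) hj1,
      smul_smul, inv_mul_cancel₀ (hne _ hj1 hj2), one_smul, LinearMap.id_apply]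
  have hleft : Lstar.comp L.dualMap = LinearMap.id := by
    apply LinearMap.ext
    intro ω
    apply hinj
    rw [LinearMap.comp_apply, LinearMap.id_apply]
    exact LinearMap.congr_fun hright (L.dualMap ω)
  exact ⟨hleft, hright⟩
end
end
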